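/- arXiv:2510.22031 — 7 statements merged into one kernel-verified Lean document; each statement's English description precedes it below -/
import Mathlib

section
/- Let A : Fin d → Fin d → Bool be a DAG and let x, y be distinct nodes. Then x and y are d-connected given the empty conditioning set in A if and only if there exists a node a ∈ Fin d with a ⤳ x and a ⤳ y (i.e., x and y have a common ancestor, possibly equal to x or y). (Theorem 3.2, 0th-order case.) -/
/-- A directed path from `x` to `y` of length `k` in the directed graph `A`. -/
def HasPath {d : ℕ} (A : Fin d → Fin d → Bool) (x y : Fin d) (k : ℕ) : Prop :=
  ∃ v : ℕ → Fin d, v 0 = x ∧ v k = y ∧ ∀ i < k, A (v i) (v (i + 1)) = true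

/-- `y` is reachable from `x`: there is a directed path of some length `k ≥ 0`. -/
def Reachable {d : ℕ} (A : Fin d → Fin d → Bool) (x y : Fin d) : Prop :=
  ∃ k, HasPath A x y k

/-- `A` is a DAG: no directed path of positive length from a node to itself. -/
def IsDAG {d : ℕ} (A : Fin d → Fin d → Bool) : Prop :=
  ∀ (x : Fin d) (k : ℕ), 0 < k → ¬ HasPath A x x k

/-- A path between `x` and `y`: a sequence of pairwise distinct nodes
`p 0 = x, …, p m = y` with `m ≥ 1` such that consecutive nodes are joined by an
edge in one direction or the other. -/
structure IsPath {d : ℕ} (A : Fin d → Fin d → Bool) (x y : Fin d)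
    (p : ℕ → Fin d) (m : ℕ) : Prop where
  one_le : 1 ≤ m
  first : p 0 = x
  last : p m = y
  nodup : ∀ i ≤ m, ∀ j ≤ m, p i = p j → i = j
  step : ∀ i < m, A (p i) (p (i + 1)) = true ∨ A (p (i + 1)) (p i) = true

/-- The internal node `p i` is a collider on the path `p`. -/
def IsCollider {d : ℕ} (A : Fin d → Fin d → Bool) (p : ℕ → Fin d) (i : ℕ) : Prop :=
  A (p (i - 1)) (p i) = true ∧ A (p (i + 1)) (p i) = true

/-- The path `p` (of length `m`) between `x` and `y` is d-connecting given the set `Z`: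
every internal non-collider node lies outside `Z`, and from every collider some
member of `Z` is reachable. -/
def IsDConnectingPath {d : ℕ} (A : Fin d → Fin d → Bool) (x y : Fin d)
    (Z : Set (Fin d)) (p : ℕ → Fin d) (m : ℕ) : Prop :=
  IsPath A x y p m ∧
    (∀ i, 0 < i → i < m → ¬ IsCollider A p i → p i ∉ Z) ∧
    (∀ i, 0 < i → i < m → IsCollider A p i → ∃ w ∈ Z, Reachable A (p i) w)

/-- `x` and `y` are d-connected given `Z` in `A`. -/
def DConnected {d : ℕ} (A : Fin d → Fin d → Bool) (x y : Fin d) (Z : Set (Fin d)) : Prop :=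
  ∃ p m, IsDConnectingPath A x y Z p m

private lemma no_two_cycle {d : ℕ} {A : Fin d → Fin d → Bool} (hA : IsDAG A) {u v : Fin d}
    (h1 : A u v = true) (h2 : A v u = true) : False := by
  refine hA u 2 (by norm_num) ⟨fun t => if t = 1 then v else u, by simp, by simp, ?_⟩
  intro i hi
  interval_cases i <;> simp [h1, h2]

private lemma path_inj {d : ℕ} {A : Fin d → Fin d → Bool} (hA : IsDAG A) {v : ℕ → Fin d} {k : ℕ}
    (hv : ∀ i < k, A (v i) (v (i + 1)) = true) {s t : ℕ} (hs : s < t) (ht : t ≤ k)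
    (heq : v s = v t) : False := by
  refine hA (v s) (t - s) (by omega) ⟨fun u => v (s + u), rfl, ?_, ?_⟩
  · show v (s + (t - s)) = v s
    rw [show s + (t - s) = t from by omega]; exact heq.symm
  · intro i hi
    exact hv (s + i) (by omega)

/-- Theorem 3.2, 0th-order case: in a DAG, two distinct nodes are d-connected given
the empty set iff they have a common ancestor (possibly one of the two nodes). -/
theorem dConnected_empty_iff_common_ancestor {d : ℕ} (A : Fin d → Fin d → Bool)
    (hA : IsDAG A) (x y : Fin d) (hxy : x ≠ y) :
    DConnected A x y ∅ ↔ ∃ a : Fin d, Reachable A a x ∧ Reachable A a y := by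
  classical
  constructor
  · rintro ⟨p, m, ⟨hP, _, hcol⟩⟩
    obtain ⟨h1m, hfirst, hlast, hnodup, hstep⟩ := hP
    have nocol : ∀ i, 0 < i → i < m → ¬ IsCollider A p i := by
      intro i h1 h2 hc
      obtain ⟨w, hw, _⟩ := hcol i h1 h2 hc
      exact hw
    have hex : ∃ i, i = m ∨ A (p i) (p (i + 1)) = true := ⟨m, Or.inl rfl⟩
    set j := Nat.find hex with hjdef
    have hj := Nat.find_spec hex
    have hjle : j ≤ m := Nat.find_le (Or.inl rfl)
    have hback : ∀ i < j, A (p (i + 1)) (p i) = true := by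
      intro i hi
      have hnot := Nat.find_min hex hi
      push_neg at hnot
      rcases hstep i (by omega) with h | h
      · exact absurd h hnot.2
      · exact h
    have hfwd : ∀ t, j + t < m → A (p (j + t)) (p (j + t + 1)) = true := by
      intro t
      induction t with
      | zero =>
        intro h
        rcases hj with h' | h'
        · omega
        · exact h'
      | succ n ih =>
        intro h
        have hn := ih (by omega)
        have hni := nocol (j + n + 1) (by omega) (by omega)
        rcases hstep (j + n + 1) (by omega) with h2 | h2
        · exact h2
        · exact absurd ⟨hn, h2⟩ hni
    refine ⟨p j, ⟨j, fun t => p (j - t), rfl, ?_, ?_⟩, ⟨m - j, fun t => p (j + t), rfl, ?_, ?_⟩⟩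
    · show p (j - j) = x
      rw [Nat.sub_self]; exact hfirst
    · intro t ht
      have h := hback (j - (t + 1)) (by omega)
      rwa [show j - (t + 1) + 1 = j - t from by omega] at h
    · show p (j + (m - j)) = y
      rw [show j + (m - j) = m from by omega]; exact hlast
    · intro t ht
      exact hfwd t (by omega)
  · rintro ⟨a₀, ⟨k₁, p₁, hp₁0, hp₁k, hp₁s⟩, ⟨k₂, p₂, hp₂0, hp₂k, hp₂s⟩⟩
    have hex : ∃ n, ∃ (a : Fin d) (k l : ℕ) (p q : ℕ → Fin d), k + l = n ∧
        p 0 = a ∧ p k = x ∧ (∀ i < k, A (p i) (p (i + 1)) = true) ∧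
        q 0 = a ∧ q l = y ∧ (∀ i < l, A (q i) (q (i + 1)) = true) :=
      ⟨k₁ + k₂, a₀, k₁, k₂, p₁, p₂, rfl, hp₁0, hp₁k, hp₁s, hp₂0, hp₂k, hp₂s⟩
    obtain ⟨a, k, l, p, q, hn, hp0, hpk, hps, hq0, hql, hqs⟩ := Nat.find_spec hex
    have hmin : ∀ n' < k + l, ¬ ∃ (a' : Fin d) (k' l' : ℕ) (p' q' : ℕ → Fin d),
        k' + l' = n' ∧ p' 0 = a' ∧ p' k' = x ∧ (∀ i < k', A (p' i) (p' (i + 1)) = true) ∧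
        q' 0 = a' ∧ q' l' = y ∧ (∀ i < l', A (q' i) (q' (i + 1)) = true) :=
      fun n' h' => Nat.find_min hex (by omega)
    set P : ℕ → Fin d := fun t => if t ≤ k then p (k - t) else q (t - k) with hPdef
    have Ple : ∀ t, t ≤ k → P t = p (k - t) := by
      intro t h; simp only [hPdef]; rw [if_pos h]
    have Pge : ∀ t, k ≤ t → P t = q (t - k) := by
      intro t h
      rcases eq_or_lt_of_le h with h' | h'
      · subst h'
        simp only [hPdef]
        rw [if_pos le_rfl, Nat.sub_self, hp0, hq0]
      · simp only [hPdef]; rw [if_neg (by omega)]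
    have hm1 : 1 ≤ k + l := by
      by_contra h
      have hk0 : k = 0 := by omega
      have hl0 : l = 0 := by omega
      apply hxy
      rw [← hpk, ← hql, hk0, hl0, hp0, hq0]
    -- nodup helper
    have Hne : ∀ i j, i < j → j ≤ k + l → P i ≠ P j := by
      intro i j hij hjm heq
      by_cases hik : i ≤ k
      · by_cases hjk : j ≤ k
        · rw [Ple i hik, Ple j hjk] at heq
          exact path_inj hA hps (show k - j < k - i by omega) (by omega) heq.symm
        · -- i ≤ k < j : common ancestor closer, contradicts minimality
          rw [Ple i hik, Pge j (by omega)] at heq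
          refine hmin (i + (l - (j - k))) (by omega)
            ⟨p (k - i), i, l - (j - k), fun t => p (k - i + t), fun t => q (j - k + t),
              rfl, rfl, ?_, ?_, heq.symm, ?_, ?_⟩
          · show p (k - i + i) = x
            rw [show k - i + i = k from by omega]; exact hpk
          · intro t ht; exact hps (k - i + t) (by omega)
          · show q (j - k + (l - (j - k))) = y
            rw [show j - k + (l - (j - k)) = l from by omega]; exact hql
          · intro t ht; exact hqs (j - k + t) (by omega)
      · rw [Pge i (by omega), Pge j (by omega)] at heq
        exact path_inj hA hqs (show i - k < j - k by omega) (by omega) heq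
    refine ⟨P, k + l, ⟨hm1, ?_, ?_, ?_, ?_⟩, ?_, ?_⟩
    · rw [Ple 0 (by omega), Nat.sub_zero]; exact hpk
    · rw [Pge (k + l) (by omega), Nat.add_sub_cancel_left]; exact hql
    · intro i hi j hj heq
      by_contra hne
      rcases Nat.lt_or_ge i j with h | h
      · exact Hne i j h hj heq
      · exact Hne j i (by omega) hi heq.symm
    · intro i hi
      by_cases hik : i < k
      · right
        rw [Ple i (by omega), Ple (i + 1) (by omega)]
        have h := hps (k - (i + 1)) (by omega)
        rwa [show k - (i + 1) + 1 = k - i from by omega] at h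
      · left
        rw [Pge i (by omega), Pge (i + 1) (by omega),
          show i + 1 - k = i - k + 1 from by omega]
        exact hqs (i - k) (by omega)
    · intro i _ _ _
      exact Set.notMem_empty _
    · intro i h0 him hc
      exfalso
      obtain ⟨hc1, hc2⟩ := hc
      by_cases hik : i < k
      · -- backward section: edge P i → P (i-1) exists
        have h := hps (k - i) (by omega)
        rw [show k - i + 1 = k - (i - 1) from by omega] at h
        rw [Ple (i - 1) (by omega), Ple i (by omega)] at hc1
        exact no_two_cycle hA h hc1
      · have h := hqs (i - k) (by omega)
        rw [Pge i (by omega), Pge (i + 1) (by omega),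
          show i + 1 - k = i - k + 1 from by omega] at hc2
        exact no_two_cycle hA h hc2
end

section
/- Let A : Fin d → Fin d → Bool be a DAG and let x, y, z be pairwise distinct nodes. Then x and y are d-connected given {z} in A if and only if: either there exists a node w with w ⤳ x and w ⤳ y in A₋z; or both of the following hold: (i) there exist nodes a ≠ z and w with w ⤳ x and w ⤳ a in A₋z and a ⤳ z in A, and (ii) there exist nodes b ≠ z and w′ with w′ ⤳ y and w′ ⤳ b in A₋z and b ⤳ z in A. (Theorem 3.2, 1st-order case.) -/
/-- The node-deleted graph `A₋z`. -/
def delNode {d : ℕ} (A : Fin d → Fin d → Bool) (z : Fin d) : Fin d → Fin d → Bool :=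
  fun u v => A u v && decide (u ≠ z) && decide (v ≠ z)

namespace DSep
variable {d : ℕ} {A : Fin d → Fin d → Bool} {z u v x y w : Fin d}

lemma delNode_iff : delNode A z u v = true ↔ A u v = true ∧ u ≠ z ∧ v ≠ z := by
  simp [delNode, and_assoc]

lemma reach_refl (A : Fin d → Fin d → Bool) (x : Fin d) : Reachable A x x :=
  ⟨0, fun _ => x, rfl, rfl, by omega⟩

lemma reach_step (h : A x y = true) : Reachable A x y := by
  refine ⟨1, fun i => if i = 0 then x else y, by simp, by simp, ?_⟩
  intro i hi
  have : i = 0 := by omega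
  simp [this, h]

lemma hasPath_snoc {k : ℕ} (h : HasPath A x y k) (e : A y v = true) :
    HasPath A x v (k + 1) := by
  obtain ⟨p, h0, hk, he⟩ := h
  refine ⟨fun i => if i ≤ k then p i else v, by simp [h0], by simp, ?_⟩
  intro i hi
  by_cases hik : i < k
  · simp only [if_pos (show i ≤ k by omega), if_pos (show i + 1 ≤ k by omega)]
    exact he i hik
  · have : i = k := by omega
    subst this
    simp [hk, e]

lemma reach_trans (h1 : Reachable A x y) (h2 : Reachable A y v) : Reachable A x v := by
  obtain ⟨l, hp⟩ := h2
  induction l generalizing v with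
  | zero =>
    obtain ⟨p, h0, hk, _⟩ := hp
    rw [h0] at hk; rw [← hk]; exact h1
  | succ l ih =>
    obtain ⟨p, h0, hk, he⟩ := hp
    have hmid : Reachable A x (p l) := ih ⟨p, h0, rfl, fun i hi => he i (by omega)⟩
    obtain ⟨k, hk'⟩ := hmid
    exact ⟨k + 1, hasPath_snoc hk' (by rw [← hk]; exact he l (by omega))⟩

lemma reach_mono {B : Fin d → Fin d → Bool} (hBA : ∀ u v, B u v = true → A u v = true)
    (h : Reachable B x y) : Reachable A x y := by
  obtain ⟨k, p, h0, hk, he⟩ := h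
  exact ⟨k, p, h0, hk, fun i hi => hBA _ _ (he i hi)⟩

lemma reach_del (h : Reachable (delNode A z) x y) : Reachable A x y :=
  reach_mono (fun u v h => (delNode_iff.1 h).1) h

lemma no_self (hA : IsDAG A) (u : Fin d) : ¬ A u u = true := by
  intro h
  exact hA u 1 (by omega) ⟨fun _ => u, rfl, rfl, fun i hi => h⟩

lemma no_two (hA : IsDAG A) (h1 : A u v = true) (h2 : A v u = true) : False := by
  refine hA u 2 (by omega) ⟨fun i => if i = 1 then v else u, by simp, by simp, ?_⟩
  intro i hi
  interval_cases i <;> simp [h1, h2]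

end DSep

namespace DSep
variable {d : ℕ} {A : Fin d → Fin d → Bool} {x y : Fin d} {Z : Set (Fin d)}

lemma walk_to_path (hA : IsDAG A) (hxy : x ≠ y) :
    ∀ m (p : ℕ → Fin d), p 0 = x → p m = y →
    (∀ i < m, A (p i) (p (i + 1)) = true ∨ A (p (i + 1)) (p i) = true) →
    (∀ i, 0 < i → i < m → ¬ IsCollider A p i → p i ∉ Z) →
    (∀ i, 0 < i → i < m → IsCollider A p i → ∃ w ∈ Z, Reachable A (p i) w) →
    DConnected A x y Z := by
  intro m
  induction m using Nat.strong_induction_on with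
  | _ m IH =>
  intro p h0 hm hs hnc hc
  by_cases hinj : ∀ i ≤ m, ∀ j ≤ m, i < j → p i ≠ p j
  · have hm1 : 1 ≤ m := by
      rcases Nat.eq_zero_or_pos m with h | h
      · subst h; rw [h0] at hm; exact absurd hm hxy
      · exact h
    refine ⟨p, m, ⟨⟨hm1, h0, hm, ?_, hs⟩, hnc, hc⟩⟩
    intro i hi j hj hij
    rcases lt_trichotomy i j with h | h | h
    · exact absurd hij (hinj i hi j hj h)
    · exact h
    · exact absurd hij.symm (hinj j hj i hi h)
  · push_neg at hinj
    obtain ⟨i, hi, j, hj, hij, hpij⟩ := hinj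
    set e := j - i with he
    set m' := m - e with hm'
    have hepos : 0 < e := by omega
    have hije : i + e = j := by omega
    have him : i < m := by omega
    set q : ℕ → Fin d := fun t => if t < i then p t else p (t + e) with hq
    have hq_ge : ∀ t, i ≤ t → q t = p (t + e) := by
      intro t ht; simp only [hq]; rw [if_neg (by omega)]
    have hq_val : ∀ t, t ≤ i → q t = p t := by
      intro t ht
      rcases Nat.lt_or_ge t i with h | h
      · simp only [hq]; rw [if_pos h]
      · have hti : t = i := by omega
        subst hti
        rw [hq_ge t le_rfl, show t + e = j by omega]
        exact hpij.symm
    have hq0 : q 0 = x := by rw [hq_val 0 (by omega), h0]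
    have hqm : q m' = y := by rw [hq_ge m' (by omega), show m' + e = m by omega, hm]
    have hsteps : ∀ t < m', A (q t) (q (t + 1)) = true ∨ A (q (t + 1)) (q t) = true := by
      intro t ht
      rcases Nat.lt_or_ge t i with h | h
      · rw [hq_val t (by omega), hq_val (t+1) (by omega)]
        exact hs t (by omega)
      · rw [hq_ge t h, hq_ge (t+1) (by omega), show t + 1 + e = (t + e) + 1 by omega]
        exact hs (t + e) (by omega)
    have hcol_lt : ∀ t, 0 < t → t < i → (IsCollider A q t ↔ IsCollider A p t) := by
      intro t ht0 hti
      unfold IsCollider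
      rw [hq_val (t-1) (by omega), hq_val t (by omega), hq_val (t+1) (by omega)]
    have hcol_gt : ∀ t, i < t → (IsCollider A q t ↔ IsCollider A p (t + e)) := by
      intro t hti
      unfold IsCollider
      rw [hq_ge (t-1) (by omega), hq_ge t (by omega), hq_ge (t+1) (by omega),
        show t - 1 + e = t + e - 1 by omega, show t + 1 + e = t + e + 1 by omega]
    have hqi : q i = p i := hq_val i le_rfl
    refine IH m' (by omega) q hq0 hqm hsteps ?_ ?_
    · -- non-collider condition
      intro t ht0 htm hncq
      rcases lt_trichotomy t i with h | h | h
      · rw [hq_val t (by omega)]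
        exact hnc t ht0 (by omega) (by rw [← hcol_lt t ht0 h]; exact hncq)
      · subst h
        have hjm : j < m := by omega
        have hqi1 : q (t+1) = p (j+1) := by
          rw [hq_ge (t+1) (by omega)]; congr 1; omega
        have hcoli : IsCollider A q t ↔
            (A (p (t-1)) (p t) = true ∧ A (p (j+1)) (p t) = true) := by
          unfold IsCollider
          rw [hq_val (t-1) (by omega), hqi, hqi1]
        rw [hcoli] at hncq
        rw [hqi]
        by_cases he1 : A (p (t-1)) (p t) = true
        · have he4 : ¬ A (p (j+1)) (p t) = true := fun h => hncq ⟨he1, h⟩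
          have : ¬ IsCollider A p j := by
            intro ⟨_, h2⟩
            rw [← hpij] at h2
            exact he4 h2
          have := hnc j (by omega) hjm this
          rw [← hpij] at this
          exact this
        · have : ¬ IsCollider A p t := fun ⟨h1, _⟩ => he1 h1
          exact hnc t ht0 him this
      · rw [hq_ge t (by omega)]
        exact hnc (t + e) (by omega) (by omega)
          (by rw [← hcol_gt t h]; exact hncq)
    · -- collider condition
      intro t ht0 htm hcq
      rcases lt_trichotomy t i with h | h | h
      · rw [hq_val t (by omega)]
        exact hc t ht0 (by omega) ((hcol_lt t ht0 h).1 hcq)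
      · subst h
        have hjm : j < m := by omega
        have hqi1 : q (t+1) = p (j+1) := by
          rw [hq_ge (t+1) (by omega)]; congr 1; omega
        have hcoli : IsCollider A q t ↔
            (A (p (t-1)) (p t) = true ∧ A (p (j+1)) (p t) = true) := by
          unfold IsCollider
          rw [hq_val (t-1) (by omega), hqi, hqi1]
        rw [hcoli] at hcq
        obtain ⟨he1, he4⟩ := hcq
        rw [hqi]
        by_cases hci : A (p (t+1)) (p t) = true
        · exact hc t ht0 him ⟨he1, hci⟩
        by_cases hcj : A (p (j-1)) (p j) = true
        · obtain ⟨w, hw, hr⟩ := hc j (by omega) hjm ⟨hcj, by rw [← hpij]; exact he4⟩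
          exact ⟨w, hw, by rw [hpij]; exact hr⟩
        · have hdi : A (p t) (p (t+1)) = true := (hs t him).resolve_right hci
          have hexK : ∃ t0, ¬ A (p (t + t0)) (p (t + t0 + 1)) = true := by
            refine ⟨j - 1 - t, ?_⟩
            rw [show t + (j - 1 - t) = j - 1 by omega, show j - 1 + 1 = j by omega]
            exact hcj
          set K0 := Nat.find hexK with hK0
          have hspec : ¬ A (p (t + K0)) (p (t + K0 + 1)) = true := Nat.find_spec hexK
          have hmin : ∀ t0 < K0, A (p (t + t0)) (p (t + t0 + 1)) = true := by
            intro t0 ht0'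
            by_contra hcon
            have h2 : K0 ≤ t0 := Nat.find_le hcon
            omega
          have hK0pos : 0 < K0 := by
            rcases Nat.eq_zero_or_pos K0 with h | h
            · exfalso; apply hspec; rw [h]; simpa using hdi
            · exact h
          have hK0le : K0 ≤ j - 1 - t := Nat.find_le (by
            rw [show t + (j - 1 - t) = j - 1 by omega, show j - 1 + 1 = j by omega]
            exact hcj)
          set K := t + K0 with hKdef
          have hKm : K < m := by omega
          have c1 : A (p (K - 1)) (p K) = true := by
            have := hmin (K0 - 1) (by omega)
            rw [show t + (K0 - 1) = K - 1 by omega, show K - 1 + 1 = K by omega] at this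
            exact this
          have c2 : A (p (K + 1)) (p K) = true := (hs K hKm).resolve_left hspec
          have hreach : Reachable A (p t) (p K) :=
            ⟨K0, fun s => p (t + s), rfl, rfl, fun s hs' => hmin s hs'⟩
          obtain ⟨w, hw, hr⟩ := hc K (by omega) hKm ⟨c1, c2⟩
          exact ⟨w, hw, reach_trans hreach hr⟩
      · rw [hq_ge t (by omega)]
        exact hc (t + e) (by omega) (by omega) ((hcol_gt t h).1 hcq)

end DSep

namespace DSep
variable {d : ℕ} {A : Fin d → Fin d → Bool} {x y z : Fin d}

lemma trek_extract (hA : IsDAG A) (z : Fin d) (p : ℕ → Fin d) (n : ℕ)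
    (hs : ∀ i < n, A (p i) (p (i + 1)) = true ∨ A (p (i + 1)) (p i) = true)
    (hnc : ∀ t, 0 < t → t < n → ¬ IsCollider A p t)
    (hz : ∀ t ≤ n, p t ≠ z) :
    ∃ w, Reachable (delNode A z) w (p 0) ∧ Reachable (delNode A z) w (p n) := by
  -- find the "top" index c: before c edges point backwards, from c onwards forwards
  obtain ⟨c, hcn, hdown, hup⟩ :
      ∃ c, c ≤ n ∧ (∀ t < c, A (p (t + 1)) (p t) = true) ∧
        (∀ t, c ≤ t → t < n → A (p t) (p (t + 1)) = true) := by
    by_cases hex : ∃ t, t < n ∧ A (p t) (p (t + 1)) = true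
    · set c := Nat.find hex with hc
      obtain ⟨hcn', hcdir⟩ := Nat.find_spec hex
      refine ⟨c, by omega, ?_, ?_⟩
      · intro t ht
        have h1 : ¬ (t < n ∧ A (p t) (p (t + 1)) = true) := Nat.find_min hex ht
        have h2 : t < n := by omega
        rcases hs t h2 with h | h
        · exact absurd ⟨h2, h⟩ h1
        · exact h
      · intro t hct htn
        induction t with
        | zero =>
          have : c = 0 := by omega
          rw [← this]; exact hcdir
        | succ t ih =>
          rcases Nat.lt_or_ge t c with h | h
          · have : c = t + 1 := by omega
            rw [← this]; exact hcdir
          · have hdt : A (p t) (p (t + 1)) = true := ih h (by omega)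
            by_contra hcon
            have h2 : A (p (t + 2)) (p (t + 1)) = true :=
              (hs (t+1) htn).resolve_left hcon
            exact hnc (t+1) (by omega) htn ⟨by simpa using hdt, h2⟩
    · push_neg at hex
      refine ⟨n, le_rfl, ?_, by omega⟩
      intro t ht
      exact (hs t ht).resolve_left (hex t ht)
  refine ⟨p c, ⟨c, fun t => p (c - t), by simp, by simp, ?_⟩,
    ⟨n - c, fun t => p (c + t), by simp, by show p (c + (n - c)) = p n; rw [show c + (n - c) = n by omega], ?_⟩⟩
  · intro t ht
    show delNode A z (p (c - t)) (p (c - (t + 1))) = true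
    rw [delNode_iff]
    refine ⟨?_, hz _ (by omega), hz _ (by omega)⟩
    have := hdown (c - t - 1) (by omega)
    rw [show c - t - 1 + 1 = c - t by omega] at this
    rw [show c - (t + 1) = c - t - 1 by omega]
    exact this
  · intro t ht
    show delNode A z (p (c + t)) (p (c + (t + 1))) = true
    rw [delNode_iff]
    refine ⟨?_, hz _ (by omega), hz _ (by omega)⟩
    rw [show c + (t + 1) = (c + t) + 1 by omega]
    exact hup (c + t) (by omega) (by omega)

lemma rev_collider (p : ℕ → Fin d) (m t : ℕ) (h1 : 0 < t) (h2 : t < m) :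
    IsCollider A (fun s => p (m - s)) t ↔ IsCollider A p (m - t) := by
  show (A (p (m - (t - 1))) (p (m - t)) = true ∧ A (p (m - (t + 1))) (p (m - t)) = true) ↔ _
  rw [show m - (t - 1) = m - t + 1 by omega, show m - (t + 1) = m - t - 1 by omega]
  exact and_comm

lemma rev_dconn {Z : Set (Fin d)} {p : ℕ → Fin d} {m : ℕ}
    (h : IsDConnectingPath A x y Z p m) :
    IsDConnectingPath A y x Z (fun s => p (m - s)) m := by
  obtain ⟨⟨h1, h2, h3, h4, h5⟩, hnc, hc⟩ := h
  refine ⟨⟨h1, by simpa using h3, by simpa using h2, ?_, ?_⟩, ?_, ?_⟩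
  · intro i hi j hj hij
    have := h4 (m - i) (by omega) (m - j) (by omega) hij
    omega
  · intro i hi
    have := h5 (m - i - 1) (by omega)
    rw [show m - i - 1 + 1 = m - i by omega] at this
    rw [show m - (i + 1) = m - i - 1 by omega]
    exact this.symm
  · intro t ht0 htm hncr
    rw [rev_collider p m t ht0 htm] at hncr
    exact hnc (m - t) (by omega) (by omega) hncr
  · intro t ht0 htm hcr
    rw [rev_collider p m t ht0 htm] at hcr
    exact hc (m - t) (by omega) (by omega) hcr

lemma half_forward (hA : IsDAG A) (hxz : x ≠ z) {p : ℕ → Fin d} {m : ℕ}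
    (h : IsDConnectingPath A x y ({z} : Set (Fin d)) p m)
    (hcol : ∃ i, 0 < i ∧ i < m ∧ IsCollider A p i) :
    ∃ a : Fin d, a ≠ z ∧ ∃ w : Fin d,
      Reachable (delNode A z) w x ∧ Reachable (delNode A z) w a ∧ Reachable A a z := by
  classical
  obtain ⟨hp, hnc, hc⟩ := h
  set i1 := Nat.find hcol with hi1
  obtain ⟨hi1pos, hi1m, hi1col⟩ := Nat.find_spec hcol
  have hmin : ∀ t, 0 < t → t < i1 → ¬ IsCollider A p t := by
    intro t ht0 hti hcont
    have : i1 ≤ t := Nat.find_le ⟨ht0, by omega, hcont⟩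
    omega
  have hznodes : ∀ t ≤ i1 - 1, p t ≠ z := by
    intro t ht
    rcases Nat.eq_zero_or_pos t with h | h
    · subst h; rw [hp.first]; exact hxz
    · have := hnc t h (by omega) (hmin t h (by omega))
      simpa using this
  obtain ⟨w, hw1, hw2⟩ := trek_extract hA z p (i1 - 1)
    (fun t ht => hp.step t (by omega))
    (fun t ht0 ht => hmin t ht0 (by omega))
    hznodes
  rw [hp.first] at hw1
  have hcA : A (p (i1 - 1)) (p i1) = true := hi1col.1
  obtain ⟨w', hw', hreach⟩ := hc i1 hi1pos hi1m hi1col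
  have hwz : w' = z := by simpa using hw'
  rw [hwz] at hreach
  by_cases hpz : p i1 = z
  · refine ⟨p (i1 - 1), ?_, w, hw1, hw2, ?_⟩
    · intro hcon
      have := hp.nodup (i1 - 1) (by omega) i1 (by omega) (by rw [hcon, hpz])
      omega
    · have h2 : A (p (i1 - 1)) z = true := by rw [← hpz]; exact hcA
      exact reach_step h2
  · refine ⟨p i1, hpz, w, hw1, ?_, hreach⟩
    refine reach_trans hw2 (reach_step ?_)
    rw [delNode_iff]
    exact ⟨hcA, hznodes (i1 - 1) le_rfl, hpz⟩

end DSep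

namespace DSep
variable {d : ℕ} {A : Fin d → Fin d → Bool} {x y z a w : Fin d}

/-- Build a collider-free walk `x … w … y` avoiding `z`, from a common ancestor in `A₋z`. -/
lemma gw_trek (hA : IsDAG A) (hxz : x ≠ z) (hyz : y ≠ z)
    (h1 : Reachable (delNode A z) w x) (h2 : Reachable (delNode A z) w y) :
    ∃ p m, p 0 = x ∧ p m = y ∧
      (∀ i < m, A (p i) (p (i + 1)) = true ∨ A (p (i + 1)) (p i) = true) ∧
      (∀ t, 0 < t → t < m → ¬ IsCollider A p t) ∧
      (∀ t ≤ m, p t ≠ z) := by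
  obtain ⟨k, P, hP0, hPk, hPe⟩ := h1
  obtain ⟨l, Q, hQ0, hQl, hQe⟩ := h2
  have hPz : ∀ j ≤ k, P j ≠ z := by
    intro j hj
    rcases Nat.lt_or_ge j k with h | h
    · exact (delNode_iff.1 (hPe j h)).2.1
    · have : j = k := by omega
      rw [this, hPk]; exact hxz
  have hQz : ∀ j ≤ l, Q j ≠ z := by
    intro j hj
    rcases Nat.lt_or_ge j l with h | h
    · exact (delNode_iff.1 (hQe j h)).2.1
    · have : j = l := by omega
      rw [this, hQl]; exact hyz
  set p : ℕ → Fin d := fun t => if t ≤ k then P (k - t) else Q (t - k) with hp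
  have hp_le : ∀ t, t ≤ k → p t = P (k - t) := by
    intro t ht; simp only [hp]; rw [if_pos ht]
  have hp_ge : ∀ t, k ≤ t → p t = Q (t - k) := by
    intro t ht
    rcases Nat.lt_or_ge k t with h | h
    · simp only [hp]; rw [if_neg (by omega)]
    · have : t = k := by omega
      subst this
      simp only [hp]; rw [if_pos le_rfl, Nat.sub_self, hP0, hQ0]
  have eL : ∀ t < k, A (p (t + 1)) (p t) = true := by
    intro t ht
    rw [hp_le t (by omega), hp_le (t+1) (by omega)]
    have := hPe (k - t - 1) (by omega)
    rw [show k - t - 1 + 1 = k - t by omega] at this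
    rw [show k - (t + 1) = k - t - 1 by omega]
    exact (delNode_iff.1 this).1
  have eR : ∀ t, k ≤ t → t < k + l → A (p t) (p (t + 1)) = true := by
    intro t ht htl
    rw [hp_ge t ht, hp_ge (t+1) (by omega), show t + 1 - k = t - k + 1 by omega]
    exact (delNode_iff.1 (hQe (t - k) (by omega))).1
  refine ⟨p, k + l, by rw [hp_le 0 (by omega)]; simpa using hPk, ?_, ?_, ?_, ?_⟩
  · rw [hp_ge (k+l) (by omega)]; simpa using hQl
  · intro t ht
    rcases Nat.lt_or_ge t k with h | h
    · exact Or.inr (eL t h)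
    · exact Or.inl (eR t h ht)
  · intro t ht0 htm hcol
    obtain ⟨c1, c2⟩ := hcol
    rcases Nat.lt_or_ge t k with h | h
    · have := eL (t - 1) (by omega)
      rw [show t - 1 + 1 = t by omega] at this
      exact no_two hA c1 this
    · exact no_two hA c2 (eR t h htm)
  · intro t ht
    rcases Nat.lt_or_ge t k with h | h
    · rw [hp_le t (by omega)]; exact hPz _ (by omega)
    · rw [hp_ge t h]; exact hQz _ (by omega)

/-- From condition (i), build a collider-free walk `x … z` ending with a forward
edge into `z`, with all nodes but the last distinct from `z`. -/
lemma half_b (hA : IsDAG A) (hxz : x ≠ z) (haz : a ≠ z)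
    (h1 : Reachable (delNode A z) w x) (h2 : Reachable (delNode A z) w a)
    (h3 : Reachable A a z) :
    ∃ q n, 1 ≤ n ∧ q 0 = x ∧ q n = z ∧
      (∀ i < n, A (q i) (q (i + 1)) = true ∨ A (q (i + 1)) (q i) = true) ∧
      (∀ t, 0 < t → t < n → ¬ IsCollider A q t) ∧
      (∀ t < n, q t ≠ z) ∧ A (q (n - 1)) (q n) = true := by
  classical
  obtain ⟨p, m, hp0, hpm, hps, hpnc, hpz⟩ := gw_trek hA hxz haz h1 h2
  obtain ⟨nR, R, hR0, hRn, hRe⟩ := h3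
  have hexz : ∃ t, R t = z := ⟨nR, hRn⟩
  set n' := Nat.find hexz with hn'
  have hn'z : R n' = z := Nat.find_spec hexz
  have hn'min : ∀ t < n', R t ≠ z := fun t ht => Nat.find_min hexz ht
  have hn'le : n' ≤ nR := Nat.find_le hRn
  have hn'pos : 0 < n' := by
    rcases Nat.eq_zero_or_pos n' with h | h
    · exfalso; apply haz; rw [← hR0, ← hn'z, h]
    · exact h
  set q : ℕ → Fin d := fun t => if t ≤ m then p t else R (t - m) with hq
  have hq_le : ∀ t, t ≤ m → q t = p t := by
    intro t ht; simp only [hq]; rw [if_pos ht]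
  have hq_ge : ∀ t, m ≤ t → q t = R (t - m) := by
    intro t ht
    rcases Nat.lt_or_ge m t with h | h
    · simp only [hq]; rw [if_neg (by omega)]
    · have : t = m := by omega
      subst this
      simp only [hq]; rw [if_pos le_rfl, Nat.sub_self, hR0, hpm]
  have eR : ∀ t, m ≤ t → t < m + n' → A (q t) (q (t + 1)) = true := by
    intro t ht htl
    rw [hq_ge t ht, hq_ge (t+1) (by omega), show t + 1 - m = t - m + 1 by omega]
    exact hRe (t - m) (by omega)
  refine ⟨q, m + n', by omega, by rw [hq_le 0 (by omega)]; rw [hp0], ?_, ?_, ?_, ?_, ?_⟩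
  · rw [hq_ge (m + n') (by omega), show m + n' - m = n' by omega]; exact hn'z
  · intro t ht
    rcases Nat.lt_or_ge t m with h | h
    · rw [hq_le t (by omega), hq_le (t+1) (by omega)]
      exact hps t h
    · exact Or.inl (eR t h ht)
  · intro t ht0 htm hcol
    obtain ⟨c1, c2⟩ := hcol
    rcases Nat.lt_or_ge t m with h | h
    · apply hpnc t ht0 h
      constructor
      · rw [← hq_le (t-1) (by omega), ← hq_le t (by omega)]; exact c1
      · rw [← hq_le (t+1) (by omega), ← hq_le t (by omega)]; exact c2
    · exact no_two hA c2 (eR t h htm)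
  · intro t ht
    rcases Nat.lt_or_ge t m with h | h
    · rw [hq_le t (by omega)]; exact hpz _ (by omega)
    · rw [hq_ge t h]; exact hn'min _ (by omega)
  · have := eR (m + n' - 1) (by omega) (by omega)
    rw [show m + n' - 1 + 1 = m + n' by omega] at this
    exact this

/-- Glue two halves at the collider `z` and conclude d-connection. -/
lemma glue (hA : IsDAG A) (hxy : x ≠ y)
    (hx : ∃ q n, 1 ≤ n ∧ q 0 = x ∧ q n = z ∧
      (∀ i < n, A (q i) (q (i + 1)) = true ∨ A (q (i + 1)) (q i) = true) ∧
      (∀ t, 0 < t → t < n → ¬ IsCollider A q t) ∧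
      (∀ t < n, q t ≠ z) ∧ A (q (n - 1)) (q n) = true)
    (hy : ∃ q n, 1 ≤ n ∧ q 0 = y ∧ q n = z ∧
      (∀ i < n, A (q i) (q (i + 1)) = true ∨ A (q (i + 1)) (q i) = true) ∧
      (∀ t, 0 < t → t < n → ¬ IsCollider A q t) ∧
      (∀ t < n, q t ≠ z) ∧ A (q (n - 1)) (q n) = true) :
    DConnected A x y {z} := by
  obtain ⟨q, n, hn1, hq0, hqn, hqs, hqnc, hqz, hqf⟩ := hx
  obtain ⟨r, n', hn1', hr0, hrn, hrs, hrnc, hrz, hrf⟩ := hy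
  set m := n + n' with hm
  set p : ℕ → Fin d := fun t => if t ≤ n then q t else r (m - t) with hp
  have hp_le : ∀ t, t ≤ n → p t = q t := by
    intro t ht; simp only [hp]; rw [if_pos ht]
  have hp_ge : ∀ t, n ≤ t → t ≤ m → p t = r (m - t) := by
    intro t ht htm
    rcases Nat.lt_or_ge n t with h | h
    · simp only [hp]; rw [if_neg (by omega)]
    · have : t = n := by omega
      subst this
      simp only [hp]
      rw [if_pos le_rfl, show m - t = n' by omega, hrn, hqn]
  apply walk_to_path hA hxy m p (by rw [hp_le 0 (by omega), hq0])
    (by rw [hp_ge m (by omega) le_rfl, Nat.sub_self, hr0])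
  · intro t ht
    rcases Nat.lt_or_ge t n with h | h
    · rw [hp_le t (by omega), hp_le (t+1) (by omega)]
      exact hqs t h
    · rw [hp_ge t h (by omega), hp_ge (t+1) (by omega) (by omega),
        show m - (t + 1) = m - t - 1 by omega]
      have := hrs (m - t - 1) (by omega)
      rw [show m - t - 1 + 1 = m - t by omega] at this
      exact this.symm
  · -- non-collider condition
    intro t ht0 htm hncol
    rcases lt_trichotomy t n with h | h | h
    · rw [hp_le t (by omega)]
      simpa using hqz t h
    · exfalso
      apply hncol
      subst h
      constructor
      · rw [hp_le (t-1) (by omega), hp_le t le_rfl]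
        exact hqf
      · rw [hp_ge (t+1) (by omega) (by omega), hp_ge t le_rfl (by omega),
          show m - (t + 1) = n' - 1 by omega, show m - t = n' by omega]
        exact hrf
    · rw [hp_ge t (by omega) (by omega)]
      simpa using hrz (m - t) (by omega)
  · -- collider condition
    intro t ht0 htm hcol
    rcases lt_trichotomy t n with h | h | h
    · exfalso
      obtain ⟨c1, c2⟩ := hcol
      apply hqnc t ht0 h
      constructor
      · rw [← hp_le (t-1) (by omega), ← hp_le t (by omega)]; exact c1
      · rw [← hp_le (t+1) (by omega), ← hp_le t (by omega)]; exact c2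
    · refine ⟨z, by simp, ?_⟩
      rw [hp_le t (by omega), h, hqn] at *
      exact reach_refl A z
    · exfalso
      obtain ⟨c1, c2⟩ := hcol
      apply hrnc (m - t) (by omega) (by omega)
      rw [hp_ge (t+1) (by omega) (by omega), hp_ge t (by omega) (by omega)] at c2
      rw [hp_ge (t-1) (by omega) (by omega), hp_ge t (by omega) (by omega)] at c1
      constructor
      · rw [show m - t - 1 = m - (t+1) by omega]
        exact c2
      · rw [show m - t + 1 = m - (t - 1) by omega]
        exact c1

end DSep

/-- Theorem 3.2, 1st-order case: in a DAG, pairwise distinct nodes `x` and `y` are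
d-connected given `{z}` iff either they have a common ancestor in `A₋z`, or both
(i) some `a ≠ z` has a common ancestor with `x` in `A₋z` and reaches `z` in `A`, and
(ii) some `b ≠ z` has a common ancestor with `y` in `A₋z` and reaches `z` in `A`. -/
theorem dConnected_singleton_iff {d : ℕ} (A : Fin d → Fin d → Bool) (hA : IsDAG A)
    (x y z : Fin d) (hxy : x ≠ y) (hxz : x ≠ z) (hyz : y ≠ z) :
    DConnected A x y {z} ↔
      (∃ w : Fin d, Reachable (delNode A z) w x ∧ Reachable (delNode A z) w y) ∨
      ((∃ a : Fin d, a ≠ z ∧ ∃ w : Fin d,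
          Reachable (delNode A z) w x ∧ Reachable (delNode A z) w a ∧ Reachable A a z) ∧
       (∃ b : Fin d, b ≠ z ∧ ∃ w' : Fin d,
          Reachable (delNode A z) w' y ∧ Reachable (delNode A z) w' b ∧ Reachable A b z)) := by
  constructor
  · rintro ⟨p, m, hdc⟩
    by_cases hcol : ∃ i, 0 < i ∧ i < m ∧ IsCollider A p i
    · right
      refine ⟨DSep.half_forward hA hxz hdc hcol, ?_⟩
      obtain ⟨i, hi0, him, hic⟩ := hcol
      refine DSep.half_forward hA hyz (DSep.rev_dconn hdc) ⟨m - i, by omega, by omega, ?_⟩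
      rw [DSep.rev_collider p m (m - i) (by omega) (by omega),
        show m - (m - i) = i by omega]
      exact hic
    · left
      obtain ⟨hp, hnc, hc⟩ := hdc
      have hz : ∀ t ≤ m, p t ≠ z := by
        intro t ht
        rcases Nat.eq_zero_or_pos t with h | h
        · subst h; rw [hp.first]; exact hxz
        rcases Nat.lt_or_ge t m with h2 | h2
        · have := hnc t h h2 (fun hcon => hcol ⟨t, h, h2, hcon⟩)
          simpa using this
        · have : t = m := by omega
          rw [this, hp.last]; exact hyz
      obtain ⟨w, hw1, hw2⟩ := DSep.trek_extract hA z p m hp.step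
        (fun t h1 h2 hcon => hcol ⟨t, h1, h2, hcon⟩) hz
      rw [hp.first] at hw1
      rw [hp.last] at hw2
      exact ⟨w, hw1, hw2⟩
  · rintro (⟨w, h1, h2⟩ | ⟨⟨a, haz, w, h1, h2, h3⟩, ⟨b, hbz, w', g1, g2, g3⟩⟩)
    · obtain ⟨p, m, hp0, hpm, hps, hpnc, hpz⟩ := DSep.gw_trek hA hxz hyz h1 h2
      exact DSep.walk_to_path hA hxy m p hp0 hpm hps
        (fun i hi1 hi2 _ => by simpa using hpz i (by omega))
        (fun i hi1 hi2 hc => absurd hc (hpnc i hi1 hi2))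
    · exact DSep.glue hA hxy (DSep.half_b hA hxz haz h1 h2 h3)
        (DSep.half_b hA hyz hbz g1 g2 g3)
end

section
/- Let W : Fin d → Fin d → ℝ have all entries in [0,1], let α ∈ (0,1], and let 0 ≤ l < d. Then for all nodes x, y: R̃_W^(l)(x,y) ≤ log 𝔼_{A∼Bern(W)}[R_A^(l)(x,y)] and Ũ_W^(l)(x,y) ≤ log 𝔼_{A∼Bern(W)}[1 − R_A^(l)(x,y)], where R_A^(l)(x,y) is interpreted as the {0,1}-valued indicator of the reachability formula, the inequalities are in the extended reals, and log 0 = −∞. (Lemma 3.6, Reachability Percolation Lower Bound.) -/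
open MeasureTheory
open scoped ENNReal

noncomputable section

/-- The reachability formula `R_A^(l)(x,y)`, defined recursively. -/
def ReachF {d : ℕ} (A : Fin d → Fin d → Bool) : ℕ → Fin d → Fin d → Bool
  | 0, x, y => decide (x = y)
  | l + 1, x, y =>
      (decide (∃ u : Fin d, ReachF A l x u = true ∧ A u y = true)) || ReachF A l x y

/-- Bernoulli measure on `Bool` with parameter `p`. -/
def bernoulliMeasure (p : ℝ) : Measure Bool :=
  ENNReal.ofReal p • Measure.dirac true + ENNReal.ofReal (1 - p) • Measure.dirac false

instance (p : ℝ) : IsFiniteMeasure (bernoulliMeasure p) := by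
  constructor
  have h : bernoulliMeasure p Set.univ = ENNReal.ofReal p + ENNReal.ofReal (1 - p) := by
    simp [bernoulliMeasure]
  rw [h]
  exact ENNReal.add_lt_top.2 ⟨ENNReal.ofReal_lt_top, ENNReal.ofReal_lt_top⟩

/-- `Bern(W)`: the product over all pairs `(u, v)` of Bernoulli measures, under which
the coordinates `A u v` are independent with `ℙ(A u v = true) = W u v`. -/
def bernMeasure {d : ℕ} (W : Fin d → Fin d → ℝ) : Measure (Fin d → Fin d → Bool) :=
  Measure.pi fun u => Measure.pi fun v => bernoulliMeasure (W u v)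

/-- Exponential on extended reals, with `exp (−∞) = 0` and `exp ⊤ = ⊤`. -/
def eexp (x : EReal) : ℝ≥0∞ :=
  if x = ⊥ then 0 else if x = ⊤ then ⊤ else ENNReal.ofReal (Real.exp x.toReal)

/-- Logarithm on `ℝ≥0∞`, with `log 0 = −∞` and `log ⊤ = ⊤`. -/
def elog (x : ℝ≥0∞) : EReal :=
  if x = 0 then ⊥ else if x = ⊤ then ⊤ else ((Real.log x.toReal : ℝ) : EReal)

/-- LogMeanExp soft disjunction `T⊕_α` with temperature `α` over a finite family. -/
def softOr (α : ℝ) {ι : Type*} [Fintype ι] (x : ι → EReal) : EReal :=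
  (α : EReal) * elog ((∑ i, eexp (((α⁻¹ : ℝ) : EReal) * x i)) / (Fintype.card ι : ℝ≥0∞))

/-- Soft graph reachability `R̃_W^(l)`. -/
def softReach {d : ℕ} (α : ℝ) (W : Fin d → Fin d → ℝ) : ℕ → Fin d → Fin d → EReal
  | 0, x, y => if x = y then 0 else ⊥
  | l + 1, x, y =>
      softOr α
        (Fin.cons (softReach α W l x y)
          (fun u : Fin d => softReach α W l x u + elog (ENNReal.ofReal (W u y))) :
          Fin (d + 1) → EReal)

/-- Soft graph unreachability `Ũ_W^(l)`. -/
def softUnreach {d : ℕ} (α : ℝ) (W : Fin d → Fin d → ℝ) : ℕ → Fin d → Fin d → EReal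
  | 0, x, y => if x ≠ y then 0 else ⊥
  | l + 1, x, y =>
      (∑ u : Fin d,
        softOr α ![softUnreach α W l x u, elog (ENNReal.ofReal (1 - W u y))])
        + softUnreach α W l x y

namespace SRX

/-! ### Extended-real logarithm toolbox -/

lemma elog_mono {a b : ℝ≥0∞} (h : a ≤ b) : elog a ≤ elog b := by
  rcases eq_or_ne a 0 with rfl | ha0
  · simp [elog]
  rcases eq_or_ne b ⊤ with rfl | hbt
  · simp [elog, ha0]
  have hb0 : b ≠ 0 := fun hb => ha0 (le_antisymm (hb ▸ h) zero_le)
  have hat : a ≠ ⊤ := fun hat => hbt (top_le_iff.mp (hat ▸ h))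
  simp only [elog, ha0, hb0, hat, hbt, if_false]
  exact_mod_cast Real.log_le_log (ENNReal.toReal_pos ha0 hat)
    (ENNReal.toReal_le_toReal hat hbt |>.mpr h)

lemma elog_mul {a b : ℝ≥0∞} (ha : a ≠ ⊤) (hb : b ≠ ⊤) :
    elog (a * b) = elog a + elog b := by
  rcases eq_or_ne a 0 with rfl | ha0
  · simp [elog]
  rcases eq_or_ne b 0 with rfl | hb0
  · simp [elog]
  have hab : a * b ≠ 0 := mul_ne_zero ha0 hb0
  have habt : a * b ≠ ⊤ := ENNReal.mul_ne_top ha hb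
  simp only [elog, ha0, hb0, hab, habt, ha, hb, if_false]
  rw [ENNReal.toReal_mul, Real.log_mul (ENNReal.toReal_ne_zero.mpr ⟨ha0, ha⟩)
    (ENNReal.toReal_ne_zero.mpr ⟨hb0, hb⟩)]
  exact_mod_cast EReal.coe_add _ _

lemma elog_prod {ι : Type*} (s : Finset ι) (q : ι → ℝ≥0∞) (hq : ∀ i ∈ s, q i ≠ ⊤) :
    elog (∏ i ∈ s, q i) = ∑ i ∈ s, elog (q i) := by
  classical
  induction s using Finset.induction with
  | empty => simp [elog]
  | insert a s hx ih =>
    rw [Finset.prod_insert hx, Finset.sum_insert hx,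
      elog_mul (hq a (Finset.mem_insert_self a s))
        (by rw [← lt_top_iff_ne_top]
            exact ENNReal.prod_lt_top fun i hi =>
              lt_top_iff_ne_top.mpr (hq i (Finset.mem_insert_of_mem hi))),
      ih fun i hi => hq i (Finset.mem_insert_of_mem hi)]

lemma elog_ofReal_one : elog (ENNReal.ofReal 1) = 0 := by
  simp [elog]

lemma softOr_le {ι : Type*} [Fintype ι] [Nonempty ι] {α : ℝ} (hα : 0 < α)
    {x : ι → EReal} {q : ℝ≥0∞} (hq : q ≠ ⊤) (h : ∀ i, x i ≤ elog q) :
    softOr α x ≤ elog q := by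
  have hαinv : (0:ℝ) < α⁻¹ := inv_pos.mpr hα
  rcases eq_or_ne q 0 with rfl | hq0
  · have hx : ∀ i, x i = ⊥ := fun i => le_bot_iff.mp (by simpa [elog] using h i)
    have he : ∀ i, eexp (((α⁻¹ : ℝ) : EReal) * x i) = 0 := by
      intro i; rw [hx i, EReal.coe_mul_bot_of_pos hαinv]; simp [eexp]
    simp only [softOr, he, Finset.sum_const_zero, ENNReal.zero_div, elog,
      if_pos rfl]
    exact (EReal.coe_mul_bot_of_pos hα).le
  · set L := Real.log q.toReal with hL
    have helog : elog q = (L : EReal) := by simp [elog, hq0, hq, hL]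
    have hbound : ∀ i, eexp (((α⁻¹ : ℝ) : EReal) * x i)
        ≤ ENNReal.ofReal (Real.exp (α⁻¹ * L)) := by
      intro i
      have hxi : x i ≤ (L : EReal) := helog ▸ h i
      obtain ⟨z, hz⟩ : ∃ z, x i = z := ⟨_, rfl⟩
      rw [hz] at hxi ⊢
      induction z using EReal.rec with
      | bot => rw [EReal.coe_mul_bot_of_pos hαinv]; simp [eexp]
      | coe r =>
        rw [← EReal.coe_mul]
        simp only [eexp, EReal.coe_ne_bot, EReal.coe_ne_top, if_false, EReal.toReal_coe]
        exact ENNReal.ofReal_le_ofReal (Real.exp_le_exp.mpr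
          (mul_le_mul_of_nonneg_left (EReal.coe_le_coe_iff.mp hxi) hαinv.le))
      | top => exact absurd hxi (by simp)
    have hsum : (∑ i, eexp (((α⁻¹ : ℝ) : EReal) * x i)) / (Fintype.card ι : ℝ≥0∞)
        ≤ ENNReal.ofReal (Real.exp (α⁻¹ * L)) := by
      apply ENNReal.div_le_of_le_mul'
      calc ∑ i, eexp (((α⁻¹ : ℝ) : EReal) * x i)
          ≤ ∑ _i : ι, ENNReal.ofReal (Real.exp (α⁻¹ * L)) :=
            Finset.sum_le_sum fun i _ => hbound i
        _ = (Fintype.card ι : ℝ≥0∞) * ENNReal.ofReal (Real.exp (α⁻¹ * L)) := by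
            rw [Finset.sum_const, nsmul_eq_mul, Finset.card_univ]
    rw [softOr, helog]
    set S := (∑ i, eexp (((α⁻¹ : ℝ) : EReal) * x i)) / (Fintype.card ι : ℝ≥0∞) with hS
    rcases eq_or_ne S 0 with h0 | hS0
    · rw [h0]
      simp only [elog, if_pos rfl]
      exact (EReal.coe_mul_bot_of_pos hα).le.trans bot_le
    · have hSt : S ≠ ⊤ := fun hst => by simp [hst] at hsum
      simp only [elog, hS0, hSt, if_false]
      rw [← EReal.coe_mul]
      apply EReal.coe_le_coe_iff.mpr
      have hSpos : 0 < S.toReal := ENNReal.toReal_pos hS0 hSt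
      have hle : S.toReal ≤ Real.exp (α⁻¹ * L) := by
        have := ENNReal.toReal_mono (ENNReal.ofReal_ne_top) hsum
        rwa [ENNReal.toReal_ofReal (Real.exp_nonneg _)] at this
      have hlog : Real.log S.toReal ≤ α⁻¹ * L :=
        (Real.log_le_log hSpos hle).trans_eq (Real.log_exp _)
      calc α * Real.log S.toReal ≤ α * (α⁻¹ * L) :=
            mul_le_mul_of_nonneg_left hlog hα.le
        _ = L := by field_simp

/-! ### Weights of the Bernoulli product measure -/

variable {d : ℕ}

def wt1 (p : ℝ) (b : Bool) : ℝ := if b then p else 1 - p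

def wt (W : Fin d → Fin d → ℝ) (A : Fin d → Fin d → Bool) : ℝ :=
  ∏ u, ∏ v, wt1 (W u v) (A u v)

lemma wt1_nonneg {p : ℝ} (hp : p ∈ Set.Icc (0:ℝ) 1) (b : Bool) : 0 ≤ wt1 p b := by
  cases b <;> simp [wt1] <;> linarith [hp.1, hp.2]

variable {W : Fin d → Fin d → ℝ}

lemma wt_nonneg (hW : ∀ u v, W u v ∈ Set.Icc (0:ℝ) 1) (A : Fin d → Fin d → Bool) :
    0 ≤ wt W A :=
  Finset.prod_nonneg fun u _ => Finset.prod_nonneg fun v _ => wt1_nonneg (hW u v) _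

lemma sum_prod_pi {ι : Type*} [Fintype ι] [DecidableEq ι] {δ : ι → Type*}
    [∀ i, Fintype (δ i)] (g : ∀ i, δ i → ℝ) :
    ∑ x : ∀ i, δ i, ∏ i, g i (x i) = ∏ i, ∑ j, g i j := by
  have h := Finset.prod_univ_sum (fun _ : ι => (Finset.univ : Finset _)) g
  rw [Fintype.piFinset_univ] at h
  exact h.symm

lemma sum_pi2 (f : Fin d → Fin d → Bool → ℝ) :
    ∑ A : Fin d → Fin d → Bool, ∏ u, ∏ v, f u v (A u v)
      = ∏ u, ∏ v, (f u v true + f u v false) := by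
  have h1 : ∑ A : Fin d → Fin d → Bool, ∏ u, ∏ v, f u v (A u v)
      = ∏ u, ∑ r : Fin d → Bool, ∏ v, f u v (r v) :=
    sum_prod_pi (δ := fun _ => Fin d → Bool) (fun u r => ∏ v, f u v (r v))
  rw [h1]
  refine Finset.prod_congr rfl fun u _ => ?_
  rw [sum_prod_pi (δ := fun _ => Bool) (fun v b => f u v b)]
  refine Finset.prod_congr rfl fun v _ => ?_
  simp [Fintype.sum_bool]

lemma sum_wt : ∑ A, wt W A = 1 := by
  unfold wt
  rw [sum_pi2]
  simp [wt1]

lemma sum_wt_ind (u y : Fin d) (g : Bool → ℝ) :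
    ∑ A, wt W A * g (A u y) = W u y * g true + (1 - W u y) * g false := by
  classical
  have hpt : ∀ A : Fin d → Fin d → Bool, wt W A * g (A u y)
      = ∏ u', ∏ v', (wt1 (W u' v') (A u' v') *
          (if u' = u ∧ v' = y then g (A u' v') else 1)) := by
    intro A
    rw [Finset.prod_congr rfl (fun u' _ => Finset.prod_mul_distrib)]
    rw [Finset.prod_mul_distrib]
    congr 1
    have : ∀ u', ∏ v', (if u' = u ∧ v' = y then g (A u' v') else 1)
        = if u' = u then g (A u' y) else 1 := by
      intro u'
      by_cases h : u' = u
      · subst h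
        simp only [true_and, if_pos rfl]
        exact Fintype.prod_ite_eq' y (fun v' => g (A u' v'))
      · simp [h]
    rw [Finset.prod_congr rfl fun u' _ => this u']
    exact (Fintype.prod_ite_eq' u (fun u' => g (A u' y))).symm
  rw [Finset.sum_congr rfl fun A _ => hpt A,
    sum_pi2 (fun u' v' b => wt1 (W u' v') b * if u' = u ∧ v' = y then g b else 1)]
  have h2 : ∀ u' v', (wt1 (W u' v') true * (if u' = u ∧ v' = y then g true else 1)
      + wt1 (W u' v') false * (if u' = u ∧ v' = y then g false else 1))
      = if u' = u ∧ v' = y then (W u y * g true + (1 - W u y) * g false) else 1 := by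
    intro u' v'
    by_cases h : u' = u ∧ v' = y
    · obtain ⟨rfl, rfl⟩ := h; simp [wt1]
    · simp [h, wt1]
  rw [Finset.prod_congr rfl fun u' _ => Finset.prod_congr rfl fun v' _ => h2 u' v']
  have h3 : ∀ u', ∏ v',
      (if u' = u ∧ v' = y then (W u y * g true + (1 - W u y) * g false) else 1)
      = if u' = u then (W u y * g true + (1 - W u y) * g false) else 1 := by
    intro u'
    by_cases h : u' = u
    · subst h; simp only [true_and]
      exact Fintype.prod_ite_eq' y _
    · simp [h]
  rw [Finset.prod_congr rfl fun u' _ => h3 u']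
  exact Fintype.prod_ite_eq' u _

lemma wt_supermod (a b : Fin d → Fin d → Bool) :
    wt W a * wt W b = wt W (a ⊓ b) * wt W (a ⊔ b) := by
  unfold wt
  rw [← Finset.prod_mul_distrib, ← Finset.prod_mul_distrib]
  refine Finset.prod_congr rfl fun u _ => ?_
  rw [← Finset.prod_mul_distrib, ← Finset.prod_mul_distrib]
  refine Finset.prod_congr rfl fun v _ => ?_
  have h1 : (a ⊓ b) u v = a u v ⊓ b u v := rfl
  have h2 : (a ⊔ b) u v = a u v ⊔ b u v := rfl
  rw [h1, h2]
  cases hA : a u v <;> cases hB : b u v <;> simp [wt1] <;> ring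

/-! ### Harris inequality for the Bernoulli weights -/

lemma harris_mono (hW : ∀ u v, W u v ∈ Set.Icc (0:ℝ) 1) {f g : (Fin d → Fin d → Bool) → ℝ}
    (hf0 : ∀ A, 0 ≤ f A) (hg0 : ∀ A, 0 ≤ g A) (hf : Monotone f) (hg : Monotone g) :
    (∑ A, wt W A * f A) * (∑ A, wt W A * g A) ≤ ∑ A, wt W A * (f A * g A) := by
  have h := fkg (μ := wt W) (f := f) (g := g) (fun A => wt_nonneg hW A)
    (fun A => hf0 A) (fun A => hg0 A) hf hg (fun a b => (wt_supermod a b).le)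
  rwa [sum_wt, one_mul] at h

lemma harris_anti (hW : ∀ u v, W u v ∈ Set.Icc (0:ℝ) 1) {f g : (Fin d → Fin d → Bool) → ℝ}
    (hf0 : ∀ A, 0 ≤ f A) (hg0 : ∀ A, 0 ≤ g A) (hf : Antitone f) (hg : Antitone g) :
    (∑ A, wt W A * f A) * (∑ A, wt W A * g A) ≤ ∑ A, wt W A * (f A * g A) := by
  have hsm : ∀ a b : (Fin d → Fin d → Bool)ᵒᵈ,
      wt W (OrderDual.ofDual a) * wt W (OrderDual.ofDual b) ≤
        wt W (OrderDual.ofDual (a ⊓ b)) * wt W (OrderDual.ofDual (a ⊔ b)) := fun a b =>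
    ((wt_supermod (OrderDual.ofDual a) (OrderDual.ofDual b)).trans (mul_comm _ _)).le
  have h := fkg (fun A => f (OrderDual.ofDual A)) (fun A => g (OrderDual.ofDual A))
    (fun A => wt W (OrderDual.ofDual A)) (fun A => wt_nonneg hW _) (fun A => hf0 _)
    (fun A => hg0 _) (fun A B hAB => hf hAB) (fun A B hAB => hg hAB) hsm
  have hone : (∑ A : (Fin d → Fin d → Bool)ᵒᵈ, wt W (OrderDual.ofDual A)) = 1 := sum_wt
  rw [hone, one_mul] at h
  exact h

lemma sum_wt_mul_nonneg (hW : ∀ u v, W u v ∈ Set.Icc (0:ℝ) 1)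
    {f : (Fin d → Fin d → Bool) → ℝ} (hf : ∀ A, 0 ≤ f A) :
    0 ≤ ∑ A, wt W A * f A :=
  Finset.sum_nonneg fun A _ => mul_nonneg (wt_nonneg hW A) (hf A)

lemma sum_wt_mono (hW : ∀ u v, W u v ∈ Set.Icc (0:ℝ) 1)
    {f g : (Fin d → Fin d → Bool) → ℝ} (h : ∀ A, f A ≤ g A) :
    ∑ A, wt W A * f A ≤ ∑ A, wt W A * g A :=
  Finset.sum_le_sum fun A _ => mul_le_mul_of_nonneg_left (h A) (wt_nonneg hW A)

lemma harris_prod (hW : ∀ u v, W u v ∈ Set.Icc (0:ℝ) 1) {ι : Type*} [DecidableEq ι]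
    (s : Finset ι) (h : ι → (Fin d → Fin d → Bool) → ℝ)
    (h0 : ∀ i A, 0 ≤ h i A) (hanti : ∀ i, Antitone (h i)) :
    ∏ i ∈ s, (∑ A, wt W A * h i A) ≤ ∑ A, wt W A * ∏ i ∈ s, h i A := by
  induction s using Finset.induction with
  | empty => simp [sum_wt]
  | insert a s hx ih =>
    rw [Finset.prod_insert hx]
    have hg0 : ∀ A, 0 ≤ ∏ i ∈ s, h i A := fun A =>
      Finset.prod_nonneg fun i _ => h0 i A
    have hganti : Antitone (fun A => ∏ i ∈ s, h i A) := fun A B hAB =>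
      Finset.prod_le_prod (fun i _ => h0 i B) (fun i _ => hanti i hAB)
    calc (∑ A, wt W A * h a A) * ∏ i ∈ s, (∑ A, wt W A * h i A)
        ≤ (∑ A, wt W A * h a A) * (∑ A, wt W A * ∏ i ∈ s, h i A) :=
          mul_le_mul_of_nonneg_left ih (sum_wt_mul_nonneg hW (h0 a))
      _ ≤ ∑ A, wt W A * (h a A * ∏ i ∈ s, h i A) :=
          harris_anti hW (h0 a) hg0 (hanti a) hganti
      _ = ∑ A, wt W A * ∏ i ∈ insert a s, h i A := by
          exact Finset.sum_congr rfl fun A _ => by rw [Finset.prod_insert hx]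

/-! ### The Bernoulli product measure as a weighted sum -/

lemma bernoulliMeasure_singleton {p : ℝ} (hp : p ∈ Set.Icc (0:ℝ) 1) (b : Bool) :
    bernoulliMeasure p {b} = ENNReal.ofReal (wt1 p b) := by
  cases b <;>
    simp [bernoulliMeasure, wt1, Measure.dirac_apply, Set.indicator_apply]

lemma bernMeasure_singleton (hW : ∀ u v, W u v ∈ Set.Icc (0:ℝ) 1)
    (A : Fin d → Fin d → Bool) :
    bernMeasure W {A} = ENNReal.ofReal (wt W A) := by
  rw [bernMeasure, ← Set.univ_pi_singleton, Measure.pi_pi]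
  have h1 : ∀ u : Fin d, (Measure.pi fun v => bernoulliMeasure (W u v)) {A u}
      = ENNReal.ofReal (∏ v, wt1 (W u v) (A u v)) := by
    intro u
    rw [← Set.univ_pi_singleton, Measure.pi_pi,
      Finset.prod_congr rfl fun v _ => bernoulliMeasure_singleton (hW u v) (A u v)]
    exact (ENNReal.ofReal_prod_of_nonneg fun v _ => wt1_nonneg (hW u v) _).symm
  rw [Finset.prod_congr rfl fun u _ => h1 u, wt]
  exact (ENNReal.ofReal_prod_of_nonneg fun u _ =>
    Finset.prod_nonneg fun v _ => wt1_nonneg (hW u v) _).symm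

lemma lint_eq (hW : ∀ u v, W u v ∈ Set.Icc (0:ℝ) 1)
    (f : (Fin d → Fin d → Bool) → ℝ) (hf : ∀ A, 0 ≤ f A) :
    ∫⁻ A, ENNReal.ofReal (f A) ∂ bernMeasure W = ENNReal.ofReal (∑ A, wt W A * f A) := by
  rw [lintegral_fintype]
  rw [Finset.sum_congr rfl fun A _ => by
    rw [bernMeasure_singleton hW A, ← ENNReal.ofReal_mul (hf A), mul_comm]]
  exact (ENNReal.ofReal_sum_of_nonneg fun A _ =>
    mul_nonneg (wt_nonneg hW A) (hf A)).symm

/-! ### Reachability indicators -/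

def indR (W : Fin d → Fin d → ℝ) (l : ℕ) (x y : Fin d) : ℝ :=
  ∑ A, wt W A * (if ReachF A l x y = true then (1:ℝ) else 0)

def indN (W : Fin d → Fin d → ℝ) (l : ℕ) (x y : Fin d) : ℝ :=
  ∑ A, wt W A * (if ReachF A l x y = true then (0:ℝ) else 1)

lemma reach_mono {A B : Fin d → Fin d → Bool} (hAB : A ≤ B) (l : ℕ) (x y : Fin d)
    (h : ReachF A l x y = true) : ReachF B l x y = true := by
  induction l generalizing y with
  | zero => exact h
  | succ l ih =>
    simp only [ReachF, Bool.or_eq_true, decide_eq_true_eq] at h ⊢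
    rcases h with ⟨u, h1, h2⟩ | h
    · exact Or.inl ⟨u, ih u h1, by
        have := hAB u y
        revert h2 this
        cases A u y <;> cases B u y <;> simp⟩
    · exact Or.inr (ih y h)

lemma ind_mono {P : (Fin d → Fin d → Bool) → Bool}
    (hP : ∀ ⦃A B⦄, A ≤ B → P A = true → P B = true) :
    Monotone fun A => if P A = true then (1:ℝ) else 0 := by
  intro A B hAB
  simp only []
  by_cases h : P A = true
  · rw [if_pos h, if_pos (hP hAB h)]
  · rw [if_neg h]; positivity

lemma ind_anti {P : (Fin d → Fin d → Bool) → Bool}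
    (hP : ∀ ⦃A B⦄, A ≤ B → P A = true → P B = true) :
    Antitone fun A => if P A = true then (0:ℝ) else 1 := by
  intro A B hAB
  simp only []
  by_cases h : P A = true
  · rw [if_pos h, if_pos (hP hAB h)]
  · rw [if_neg h]
    split <;> norm_num

lemma ind_nonneg01 (b : Bool) : (0:ℝ) ≤ if b = true then (1:ℝ) else 0 := by
  cases b <;> norm_num

lemma ind_nonneg10 (b : Bool) : (0:ℝ) ≤ if b = true then (0:ℝ) else 1 := by
  cases b <;> norm_num

lemma coord_mono (u y : Fin d) : ∀ ⦃A B : Fin d → Fin d → Bool⦄, A ≤ B →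
    A u y = true → B u y = true := by
  intro A B hAB h
  have := hAB u y
  revert h this
  cases A u y <;> cases B u y <;> simp

lemma pair_mono (l : ℕ) (x u y : Fin d) : ∀ ⦃A B : Fin d → Fin d → Bool⦄, A ≤ B →
    (ReachF A l x u && A u y) = true → (ReachF B l x u && B u y) = true := by
  intro A B hAB h
  simp only [Bool.and_eq_true] at h ⊢
  exact ⟨reach_mono hAB l x u h.1, coord_mono u y hAB h.2⟩

lemma step_or_right {A : Fin d → Fin d → Bool} {l : ℕ} {x y : Fin d}
    (h : ReachF A l x y = true) : ReachF A (l + 1) x y = true := by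
  simp only [ReachF, Bool.or_eq_true]
  exact Or.inr h

lemma step_pair {A : Fin d → Fin d → Bool} {l : ℕ} {x u y : Fin d}
    (h1 : ReachF A l x u = true) (h2 : A u y = true) : ReachF A (l + 1) x y = true := by
  simp only [ReachF, Bool.or_eq_true, decide_eq_true_eq]
  exact Or.inl ⟨u, h1, h2⟩

lemma indR_nonneg (hW : ∀ u v, W u v ∈ Set.Icc (0:ℝ) 1) (l : ℕ) (x y : Fin d) :
    0 ≤ indR W l x y :=
  sum_wt_mul_nonneg hW fun A => ind_nonneg01 _

lemma indN_nonneg (hW : ∀ u v, W u v ∈ Set.Icc (0:ℝ) 1) (l : ℕ) (x y : Fin d) :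
    0 ≤ indN W l x y :=
  sum_wt_mul_nonneg hW fun A => ind_nonneg10 _

lemma S1 (hW : ∀ u v, W u v ∈ Set.Icc (0:ℝ) 1) (l : ℕ) (x u y : Fin d) :
    indR W l x u * W u y ≤ indR W (l + 1) x y := by
  have hcoord : ∑ A, wt W A * (if A u y = true then (1:ℝ) else 0) = W u y := by
    rw [sum_wt_ind u y (fun b => if b = true then (1:ℝ) else 0)]
    norm_num
  calc indR W l x u * W u y
      = (∑ A, wt W A * (if ReachF A l x u = true then (1:ℝ) else 0)) *
        (∑ A, wt W A * (if A u y = true then (1:ℝ) else 0)) := by rw [hcoord]; rfl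
    _ ≤ ∑ A, wt W A * ((if ReachF A l x u = true then (1:ℝ) else 0) *
          (if A u y = true then (1:ℝ) else 0)) :=
        harris_mono hW (fun A => ind_nonneg01 _) (fun A => ind_nonneg01 _)
          (ind_mono fun A B hAB => reach_mono hAB l x u)
          (ind_mono (coord_mono u y))
    _ ≤ indR W (l + 1) x y := by
        refine sum_wt_mono hW fun A => ?_
        by_cases h1 : ReachF A l x u = true
        · by_cases h2 : A u y = true
          · simp [h1, h2, step_pair h1 h2]
          · simp [h2, ind_nonneg01]
        · simp [h1, ind_nonneg01]

lemma S2 (hW : ∀ u v, W u v ∈ Set.Icc (0:ℝ) 1) (l : ℕ) (x y : Fin d) :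
    indR W l x y ≤ indR W (l + 1) x y := by
  refine sum_wt_mono hW fun A => ?_
  by_cases h : ReachF A l x y = true
  · simp [h, step_or_right h]
  · simp [h, ind_nonneg01]

def mQ (W : Fin d → Fin d → ℝ) (l : ℕ) (x u y : Fin d) : ℝ :=
  ∑ A, wt W A * (if (ReachF A l x u && A u y) = true then (0:ℝ) else 1)

lemma mQ_nonneg (hW : ∀ u v, W u v ∈ Set.Icc (0:ℝ) 1) (l : ℕ) (x u y : Fin d) :
    0 ≤ mQ W l x u y :=
  sum_wt_mul_nonneg hW fun A => ind_nonneg10 _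

lemma Q1 (hW : ∀ u v, W u v ∈ Set.Icc (0:ℝ) 1) (l : ℕ) (x u y : Fin d) :
    indN W l x u ≤ mQ W l x u y := by
  refine sum_wt_mono hW fun A => ?_
  by_cases h : ReachF A l x u = true
  · simp [h, ind_nonneg10]
  · simp [h]

lemma Q2 (hW : ∀ u v, W u v ∈ Set.Icc (0:ℝ) 1) (l : ℕ) (x u y : Fin d) :
    1 - W u y ≤ mQ W l x u y := by
  have hcoord : ∑ A, wt W A * (if A u y = true then (0:ℝ) else 1) = 1 - W u y := by
    rw [sum_wt_ind u y (fun b => if b = true then (0:ℝ) else 1)]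
    norm_num
  rw [← hcoord]
  refine sum_wt_mono hW fun A => ?_
  by_cases h : A u y = true
  · simp [h, ind_nonneg10]
  · simp [h]

lemma indN_succ_eq (l : ℕ) (x y : Fin d) (A : Fin d → Fin d → Bool) :
    (if ReachF A (l + 1) x y = true then (0:ℝ) else 1)
      = (if ReachF A l x y = true then (0:ℝ) else 1) *
          ∏ u, (if (ReachF A l x u && A u y) = true then (0:ℝ) else 1) := by
  by_cases h : ReachF A (l + 1) x y = true
  · rw [if_pos h]
    simp only [ReachF, Bool.or_eq_true, decide_eq_true_eq] at h
    rcases h with ⟨u, h1, h2⟩ | h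
    · rw [Finset.prod_eq_zero (Finset.mem_univ u)
        (by rw [if_pos (by simp [h1, h2])]), mul_zero]
    · rw [if_pos h, zero_mul]
  · rw [if_neg h]
    simp only [ReachF, Bool.or_eq_true, decide_eq_true_eq, not_or, not_exists] at h
    have hne : ∀ u : Fin d, (u ∈ (Finset.univ : Finset (Fin d))) →
        (if (ReachF A l x u && A u y) = true then (0:ℝ) else 1) = 1 := by
      intro u _
      refine if_neg fun hc => ?_
      rw [Bool.and_eq_true] at hc
      have hnu : ¬(ReachF A l x u = true ∧ A u y = true) := by simpa using h.1 u
      exact hnu ⟨hc.1, hc.2⟩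
    rw [if_neg h.2, Finset.prod_eq_one hne, mul_one]

lemma Q3 (hW : ∀ u v, W u v ∈ Set.Icc (0:ℝ) 1) (l : ℕ) (x y : Fin d) :
    (∏ u, mQ W l x u y) * indN W l x y ≤ indN W (l + 1) x y := by
  classical
  set h : Option (Fin d) → (Fin d → Fin d → Bool) → ℝ := fun o A =>
    match o with
    | none => if ReachF A l x y = true then (0:ℝ) else 1
    | some u => if (ReachF A l x u && A u y) = true then (0:ℝ) else 1 with hdef
  have h0 : ∀ o A, 0 ≤ h o A := by
    intro o A; cases o <;> exact ind_nonneg10 _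
  have hanti : ∀ o, Antitone (h o) := by
    intro o
    cases o with
    | none => exact ind_anti fun A B hAB => reach_mono hAB l x y
    | some u => exact ind_anti (pair_mono l x u y)
  have hp := harris_prod hW Finset.univ h h0 hanti
  rw [Fintype.prod_option] at hp
  have hL : (∏ u, mQ W l x u y) * indN W l x y
      = (∑ A, wt W A * h none A) * ∏ u, (∑ A, wt W A * h (some u) A) := by
    rw [mul_comm]; rfl
  rw [hL]
  refine hp.trans ?_
  refine le_of_eq (Finset.sum_congr rfl fun A _ => ?_)
  rw [Fintype.prod_option]
  exact congrArg (wt W A * ·) (indN_succ_eq l x y A).symm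

/-! ### Main induction -/

lemma main (hW : ∀ u v, W u v ∈ Set.Icc (0:ℝ) 1) {α : ℝ} (hα : 0 < α) (l : ℕ) :
    ∀ x y : Fin d, softReach α W l x y ≤ elog (ENNReal.ofReal (indR W l x y)) ∧
      softUnreach α W l x y ≤ elog (ENNReal.ofReal (indN W l x y)) := by
  induction l with
  | zero =>
    intro x y
    constructor
    · by_cases hxy : x = y
      · have h1 : indR W 0 x y = 1 := by
          unfold indR
          have hA : ∀ A : Fin d → Fin d → Bool,
              (if ReachF A 0 x y = true then (1:ℝ) else 0) = 1 := by
            intro A; simp [ReachF, hxy]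
          rw [Finset.sum_congr rfl fun A _ => by rw [hA A]]
          simp only [mul_one]
          exact sum_wt
        rw [h1, elog_ofReal_one]
        simp [softReach, hxy]
      · simp [softReach, hxy]
    · by_cases hxy : x = y
      · simp [softUnreach, hxy]
      · have h1 : indN W 0 x y = 1 := by
          unfold indN
          have : ∀ A : Fin d → Fin d → Bool,
              (if ReachF A 0 x y = true then (0:ℝ) else 1) = 1 := by
            intro A; simp [ReachF, hxy]
          rw [Finset.sum_congr rfl fun A _ => by rw [this A]]
          simp only [mul_one]
          exact sum_wt
        rw [h1, elog_ofReal_one]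
        simp [softUnreach, hxy]
  | succ l ih =>
    intro x y
    constructor
    · show softOr α _ ≤ _
      refine softOr_le hα ENNReal.ofReal_ne_top fun i => ?_
      refine Fin.cases ?_ ?_ i
      · rw [Fin.cons_zero]
        exact (ih x y).1.trans (elog_mono (ENNReal.ofReal_le_ofReal (S2 hW l x y)))
      · intro u
        rw [Fin.cons_succ]
        calc softReach α W l x u + elog (ENNReal.ofReal (W u y))
            ≤ elog (ENNReal.ofReal (indR W l x u)) + elog (ENNReal.ofReal (W u y)) :=
              add_le_add (ih x u).1 le_rfl
          _ = elog (ENNReal.ofReal (indR W l x u) * ENNReal.ofReal (W u y)) :=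
              (elog_mul ENNReal.ofReal_ne_top ENNReal.ofReal_ne_top).symm
          _ = elog (ENNReal.ofReal (indR W l x u * W u y)) := by
              rw [ENNReal.ofReal_mul (indR_nonneg hW l x u)]
          _ ≤ elog (ENNReal.ofReal (indR W (l + 1) x y)) :=
              elog_mono (ENNReal.ofReal_le_ofReal (S1 hW l x u y))
    · show (∑ u : Fin d, softOr α _) + softUnreach α W l x y ≤ _
      have hterm : ∀ u : Fin d,
          softOr α ![softUnreach α W l x u, elog (ENNReal.ofReal (1 - W u y))]
            ≤ elog (ENNReal.ofReal (mQ W l x u y)) := by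
        intro u
        refine softOr_le hα ENNReal.ofReal_ne_top fun i => ?_
        fin_cases i
        · show softUnreach α W l x u ≤ _
          exact (ih x u).2.trans (elog_mono (ENNReal.ofReal_le_ofReal (Q1 hW l x u y)))
        · show elog (ENNReal.ofReal (1 - W u y)) ≤ _
          exact elog_mono (ENNReal.ofReal_le_ofReal (Q2 hW l x u y))
      calc (∑ u : Fin d, softOr α ![softUnreach α W l x u, elog (ENNReal.ofReal (1 - W u y))])
            + softUnreach α W l x y
          ≤ (∑ u : Fin d, elog (ENNReal.ofReal (mQ W l x u y)))
              + elog (ENNReal.ofReal (indN W l x y)) :=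
            add_le_add (Finset.sum_le_sum fun u _ => hterm u) (ih x y).2
        _ = elog ((∏ u, ENNReal.ofReal (mQ W l x u y)) * ENNReal.ofReal (indN W l x y)) := by
            rw [elog_mul (by rw [← lt_top_iff_ne_top]
                             exact ENNReal.prod_lt_top fun u _ => ENNReal.ofReal_lt_top)
              ENNReal.ofReal_ne_top,
              elog_prod Finset.univ _ fun u _ => ENNReal.ofReal_ne_top]
        _ = elog (ENNReal.ofReal ((∏ u, mQ W l x u y) * indN W l x y)) := by
            rw [ENNReal.ofReal_mul (Finset.prod_nonneg fun u _ => mQ_nonneg hW l x u y),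
              ENNReal.ofReal_prod_of_nonneg fun u _ => mQ_nonneg hW l x u y]
        _ ≤ elog (ENNReal.ofReal (indN W (l + 1) x y)) :=
            elog_mono (ENNReal.ofReal_le_ofReal (Q3 hW l x y))

end SRX

/-- Lemma 3.6 (Reachability Percolation Lower Bound): the soft reachability and soft
unreachability scores lower-bound the logarithms of the expected reachability and
unreachability indicators under `Bern(W)`. -/
theorem softReach_le_log_expectation {d : ℕ} (W : Fin d → Fin d → ℝ)
    (hW : ∀ u v, W u v ∈ Set.Icc (0 : ℝ) 1) (α : ℝ) (hα : α ∈ Set.Ioc (0 : ℝ) 1)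
    (l : ℕ) (hl : l < d) (x y : Fin d) :
    softReach α W l x y ≤
      elog (∫⁻ A, (if ReachF A l x y = true then 1 else 0) ∂ bernMeasure W) ∧
    softUnreach α W l x y ≤
      elog (∫⁻ A, (if ReachF A l x y = true then 0 else 1) ∂ bernMeasure W) := by
  constructor
  · have h1 : ∫⁻ A, (if ReachF A l x y = true then 1 else 0) ∂ bernMeasure W
        = ENNReal.ofReal (SRX.indR W l x y) := by
      rw [show (fun A => (if ReachF A l x y = true then (1:ℝ≥0∞) else 0))
          = fun A => ENNReal.ofReal (if ReachF A l x y = true then (1:ℝ) else 0) from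
        funext fun A => by split <;> simp]
      exact SRX.lint_eq hW _ fun A => SRX.ind_nonneg01 _
    rw [h1]
    exact (SRX.main hW hα.1 l x y).1
  · have h1 : ∫⁻ A, (if ReachF A l x y = true then 0 else 1) ∂ bernMeasure W
        = ENNReal.ofReal (SRX.indN W l x y) := by
      rw [show (fun A => (if ReachF A l x y = true then (0:ℝ≥0∞) else 1))
          = fun A => ENNReal.ofReal (if ReachF A l x y = true then (0:ℝ) else 1) from
        funext fun A => by split <;> simp]
      exact SRX.lint_eq hW _ fun A => SRX.ind_nonneg10 _
    rw [h1]
    exact (SRX.main hW hα.1 l x y).2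

end
end

section
/- Let W : Fin d → Fin d → ℝ have all entries in [0,1] and let α ∈ (0,1]. Then for all nodes x, y: S̃_W^(0)(x,y) ≤ log 𝔼_{A∼Bern(W)}[S_A^(0)(x,y)] and C̃_W^(0)(x,y) ≤ log 𝔼_{A∼Bern(W)}[C_A^(0)(x,y)], where S_A^(0) and C_A^(0) are {0,1}-valued, the inequalities are in the extended reals, and log 0 = −∞. (Theorem 3.7, 0th-order inequalities.) -/
open MeasureTheory
open scoped ENNReal

noncomputable section

/-- The 0th-order d-connection formula `C_A^(0)(x,y)`, using `R_A := R_A^(d)`. -/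
def C0 {d : ℕ} (A : Fin d → Fin d → Bool) (x y : Fin d) : Bool :=
  decide (∃ a : Fin d, ReachF A d a x = true ∧ ReachF A d a y = true)

/-- The soft 0th-order d-separation score `S̃_W^(0)`. -/
def softS0 {d : ℕ} (α : ℝ) (W : Fin d → Fin d → ℝ) (x y : Fin d) : EReal :=
  ∑ a : Fin d, softOr α ![softUnreach α W d a x, softUnreach α W d a y]

/-- The soft 0th-order d-connection score `C̃_W^(0)`. -/
def softC0 {d : ℕ} (α : ℝ) (W : Fin d → Fin d → ℝ) (x y : Fin d) : EReal :=
  softOr α (fun a : Fin d => softReach α W d a x + softReach α W d a y)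


/- ============ auxiliary lemmas ============ -/

@[simp] lemma eexp_bot : eexp ⊥ = 0 := rfl
@[simp] lemma eexp_top : eexp ⊤ = ⊤ := rfl

@[simp] lemma eexp_coe (r : ℝ) : eexp (r : EReal) = ENNReal.ofReal (Real.exp r) := by
  simp [eexp]

@[simp] lemma eexp_zero : eexp (0 : EReal) = 1 := by
  rw [show (0 : EReal) = ((0 : ℝ) : EReal) from rfl, eexp_coe]
  simp

@[simp] lemma elog_zero' : elog 0 = ⊥ := by simp [elog]
@[simp] lemma elog_top' : elog ⊤ = ⊤ := by simp [elog]

@[simp] lemma elog_eexp (x : EReal) : elog (eexp x) = x := by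
  induction x using EReal.rec with
  | bot => simp
  | top => simp
  | coe r =>
    simp only [eexp_coe, elog]
    rw [if_neg, if_neg]
    · rw [ENNReal.toReal_ofReal (Real.exp_nonneg r), Real.log_exp]
    · exact ENNReal.ofReal_ne_top
    · simp [ENNReal.ofReal_eq_zero, not_le.2 (Real.exp_pos r)]

@[simp] lemma eexp_elog (x : ℝ≥0∞) : eexp (elog x) = x := by
  rcases eq_or_ne x 0 with rfl | h0
  · simp
  rcases eq_or_ne x ⊤ with rfl | ht
  · simp
  · simp only [elog, if_neg h0, if_neg ht, eexp_coe]
    rw [Real.exp_log (ENNReal.toReal_pos h0 ht), ENNReal.ofReal_toReal ht]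

lemma eexp_mono : Monotone eexp := by
  intro x y h
  induction x using EReal.rec with
  | bot => simp
  | top => rw [top_le_iff.1 h]
  | coe r =>
    induction y using EReal.rec with
    | bot => exact absurd h (by simp)
    | top => simp
    | coe s =>
      simp only [eexp_coe]
      exact ENNReal.ofReal_le_ofReal (Real.exp_le_exp.2 (by exact_mod_cast h))

lemma elog_mono : Monotone elog := by
  intro x y h
  rcases eq_or_ne x 0 with rfl | h0
  · simp
  rcases eq_or_ne y ⊤ with rfl | ht
  · simp
  have hy0 : y ≠ 0 := fun hy => h0 (le_antisymm (hy ▸ h) zero_le)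
  have hx : x ≠ ⊤ := fun hx => ht (top_le_iff.1 (hx ▸ h))
  simp only [elog, if_neg h0, if_neg hy0, if_neg ht, if_neg hx]
  exact_mod_cast Real.log_le_log (ENNReal.toReal_pos h0 hx) (ENNReal.toReal_mono ht h)

lemma le_elog_iff {x : EReal} {y : ℝ≥0∞} : x ≤ elog y ↔ eexp x ≤ y := by
  constructor
  · intro h; simpa using eexp_mono h
  · intro h; simpa using elog_mono h

lemma eexp_add (x y : EReal) : eexp (x + y) = eexp x * eexp y := by
  induction x using EReal.rec with
  | bot => simp
  | top =>
    induction y using EReal.rec with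
    | bot => simp
    | top => simp
    | coe s =>
      rw [EReal.top_add_coe]
      simp only [eexp_top, eexp_coe]
      rw [ENNReal.top_mul]
      simp [ENNReal.ofReal_eq_zero, not_le.2 (Real.exp_pos s)]
  | coe r =>
    induction y using EReal.rec with
    | bot => simp
    | top =>
      rw [EReal.coe_add_top]
      simp only [eexp_top, eexp_coe]
      rw [ENNReal.mul_top]
      simp [ENNReal.ofReal_eq_zero, not_le.2 (Real.exp_pos r)]
    | coe s =>
      rw [← EReal.coe_add]
      simp only [eexp_coe]
      rw [Real.exp_add, ENNReal.ofReal_mul (Real.exp_nonneg r)]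

lemma eexp_sum {κ : Type*} (s : Finset κ) (f : κ → EReal) :
    eexp (∑ i ∈ s, f i) = ∏ i ∈ s, eexp (f i) := by
  classical
  induction s using Finset.induction with
  | empty => simp [eexp]
  | insert _ _ h ih => rw [Finset.sum_insert h, Finset.prod_insert h, eexp_add, ih]

lemma coe_mul_inv_cancel {α : ℝ} (hα : 0 < α) (b : EReal) :
    (α : EReal) * (((α⁻¹ : ℝ) : EReal) * b) = b := by
  induction b using EReal.rec with
  | bot =>
    rw [EReal.coe_mul_bot_of_pos (inv_pos.2 hα), EReal.coe_mul_bot_of_pos hα]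
  | top =>
    rw [EReal.coe_mul_top_of_pos (inv_pos.2 hα), EReal.coe_mul_top_of_pos hα]
  | coe r =>
    rw [← EReal.coe_mul, ← EReal.coe_mul, ← mul_assoc, mul_inv_cancel₀ hα.ne', one_mul]

lemma softOr_le {ι : Type*} [Fintype ι] {α : ℝ} (hα : 0 < α) {x : ι → EReal} {b : EReal}
    (hb : ∀ i, x i ≤ b) : softOr α x ≤ b := by
  have hcE : (0:EReal) ≤ (α : EReal) := by exact_mod_cast hα.le
  have hinvE : (0:EReal) ≤ ((α⁻¹:ℝ) : EReal) := by exact_mod_cast (inv_pos.2 hα).le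
  cases isEmpty_or_nonempty ι with
  | inl h =>
    have : softOr α x = (α:EReal) * elog 0 := by
      simp [softOr, Fintype.card_eq_zero]
    rw [this, elog_zero', EReal.coe_mul_bot_of_pos hα]
    exact bot_le
  | inr h =>
    have hsum : (∑ i, eexp (((α⁻¹:ℝ):EReal) * x i)) / (Fintype.card ι : ℝ≥0∞)
        ≤ eexp (((α⁻¹:ℝ):EReal) * b) := by
      have h1 : (∑ i, eexp (((α⁻¹:ℝ):EReal) * x i))
          ≤ (Fintype.card ι : ℝ≥0∞) * eexp (((α⁻¹:ℝ):EReal) * b) := by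
        calc (∑ i, eexp (((α⁻¹:ℝ):EReal) * x i))
            ≤ ∑ _i : ι, eexp (((α⁻¹:ℝ):EReal) * b) := by
              apply Finset.sum_le_sum
              intro i _
              exact eexp_mono (mul_le_mul_of_nonneg_left (hb i) hinvE)
          _ = (Fintype.card ι : ℝ≥0∞) * eexp (((α⁻¹:ℝ):EReal) * b) := by
              rw [Finset.sum_const, Finset.card_univ, nsmul_eq_mul]
      rw [ENNReal.div_le_iff (by exact_mod_cast Fintype.card_ne_zero) (by simp)]
      rwa [mul_comm] at h1
    have h2 := elog_mono hsum
    rw [elog_eexp] at h2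
    calc softOr α x ≤ (α:EReal) * (((α⁻¹:ℝ):EReal) * b) :=
          mul_le_mul_of_nonneg_left h2 hcE
      _ = b := coe_mul_inv_cancel hα b

/- ============ Harris inequality ============ -/

lemma rearrange {a b c d : ℝ≥0∞} (hab : a ≤ b) (hcd : c ≤ d) :
    a * d + b * c ≤ a * c + b * d := by
  obtain ⟨s, rfl⟩ : ∃ s, b = a + s := ⟨b - a, by rw [add_comm, tsub_add_cancel_of_le hab]⟩
  obtain ⟨t, rfl⟩ : ∃ t, d = c + t := ⟨d - c, by rw [add_comm, tsub_add_cancel_of_le hcd]⟩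
  have : a * c + (a + s) * (c + t) = (a * (c + t) + (a + s) * c) + s * t := by ring
  rw [this]
  exact le_self_add

lemma two_point (ν : Bool → ℝ≥0∞) (hν : ν false + ν true = 1)
    (F G H : Bool → ℝ≥0∞) (hFG : ∀ b, F b * G b ≤ H b)
    (hF : F false ≤ F true) (hG : G false ≤ G true) :
    (ν false * F false + ν true * F true) * (ν false * G false + ν true * G true)
      ≤ ν false * H false + ν true * H true := by
  calc (ν false * F false + ν true * F true) * (ν false * G false + ν true * G true)
      = ν false * ν false * (F false * G false)
          + ν false * ν true * (F false * G true + F true * G false)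
          + ν true * ν true * (F true * G true) := by ring
    _ ≤ ν false * ν false * (F false * G false)
          + ν false * ν true * (F false * G false + F true * G true)
          + ν true * ν true * (F true * G true) := by
        refine add_le_add (add_le_add le_rfl (mul_le_mul_right ?_ _)) le_rfl
        exact rearrange hF hG
    _ = (ν false + ν true) * (ν false * (F false * G false) + ν true * (F true * G true)) := by
        ring
    _ = ν false * (F false * G false) + ν true * (F true * G true) := by rw [hν, one_mul]
    _ ≤ ν false * H false + ν true * H true :=
        add_le_add (mul_le_mul_right (hFG false) _) (mul_le_mul_right (hFG true) _)

lemma harris_fin : ∀ (n : ℕ) (μ : Fin n → Bool → ℝ≥0∞),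
    (∀ i, μ i false + μ i true = 1) →
    ∀ (f g : (Fin n → Bool) → ℝ≥0∞), Monotone f → Monotone g →
    (∑ A : Fin n → Bool, (∏ i, μ i (A i)) * f A) *
      (∑ A : Fin n → Bool, (∏ i, μ i (A i)) * g A)
      ≤ ∑ A : Fin n → Bool, (∏ i, μ i (A i)) * (f A * g A) := by
  intro n
  induction n with
  | zero =>
    intro μ hμ f g hf hg
    rw [Fintype.sum_unique, Fintype.sum_unique, Fintype.sum_unique]
    simp
  | succ n ih =>
    intro μ hμ f g hf hg
    have hsum : ∀ (φ : (Fin (n + 1) → Bool) → ℝ≥0∞),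
        (∑ A : Fin (n + 1) → Bool, (∏ i, μ i (A i)) * φ A)
          = ∑ b : Bool, μ 0 b * ∑ a : Fin n → Bool,
              (∏ i, μ i.succ (a i)) * φ (Fin.cons b a) := by
      intro φ
      rw [← Equiv.sum_comp (Fin.consEquiv (fun _ => Bool))
        (fun A => (∏ i, μ i (A i)) * φ A), Fintype.sum_prod_type]
      refine Finset.sum_congr rfl fun b _ => ?_
      rw [Finset.mul_sum]
      refine Finset.sum_congr rfl fun a _ => ?_
      have hc : (Fin.consEquiv (fun _ => Bool)) (b, a) = Fin.cons b a := rfl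
      rw [hc, Fin.prod_univ_succ, Fin.cons_zero, mul_assoc]
      simp [Fin.cons_succ]
    set μ' : Fin n → Bool → ℝ≥0∞ := fun i => μ i.succ with hμ'
    set F : Bool → ℝ≥0∞ := fun b => ∑ a : Fin n → Bool, (∏ i, μ' i (a i)) * f (Fin.cons b a)
    set G : Bool → ℝ≥0∞ := fun b => ∑ a : Fin n → Bool, (∏ i, μ' i (a i)) * g (Fin.cons b a)
    set H : Bool → ℝ≥0∞ := fun b =>
      ∑ a : Fin n → Bool, (∏ i, μ' i (a i)) * (f (Fin.cons b a) * g (Fin.cons b a))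
    have cons_mono : ∀ (b : Bool) (a a' : Fin n → Bool), a ≤ a' →
        (Fin.cons b a : Fin (n+1) → Bool) ≤ Fin.cons b a' := by
      intro b a a' h i
      refine Fin.cases ?_ ?_ i
      · simp
      · intro j; simpa using h j
    have cons_mono' : ∀ (a : Fin n → Bool),
        (Fin.cons false a : Fin (n+1) → Bool) ≤ Fin.cons true a := by
      intro a i
      refine Fin.cases ?_ ?_ i
      · simp [Bool.false_le]
      · intro j; simp
    have hFG : ∀ b, F b * G b ≤ H b := by
      intro b
      exact ih μ' (fun i => hμ i.succ) (fun a => f (Fin.cons b a)) (fun a => g (Fin.cons b a))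
        (fun a a' h => hf (cons_mono b a a' h)) (fun a a' h => hg (cons_mono b a a' h))
    have hF : F false ≤ F true :=
      Finset.sum_le_sum fun a _ => mul_le_mul_right (hf (cons_mono' a)) _
    have hG : G false ≤ G true :=
      Finset.sum_le_sum fun a _ => mul_le_mul_right (hg (cons_mono' a)) _
    rw [hsum f, hsum g, hsum (fun A => f A * g A)]
    rw [Fintype.sum_bool, Fintype.sum_bool, Fintype.sum_bool]
    have h2 := two_point (μ 0) (hμ 0) F G H hFG hF hG
    show (μ 0 true * F true + μ 0 false * F false) *
          (μ 0 true * G true + μ 0 false * G false)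
        ≤ μ 0 true * H true + μ 0 false * H false
    calc (μ 0 true * F true + μ 0 false * F false) *
          (μ 0 true * G true + μ 0 false * G false)
        = (μ 0 false * F false + μ 0 true * F true) *
          (μ 0 false * G false + μ 0 true * G true) := by ring
      _ ≤ μ 0 false * H false + μ 0 true * H true := h2
      _ = μ 0 true * H true + μ 0 false * H false := by ring

section ProdBernoulli

variable {ι : Type*} [Fintype ι] [DecidableEq ι]

/-- monotone boolean event -/
def EvMono (E : (ι → Bool) → Bool) : Prop :=
  ∀ A B : ι → Bool, A ≤ B → E A = true → E B = true

/-- antitone boolean event -/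
def EvAnti (E : (ι → Bool) → Bool) : Prop :=
  ∀ A B : ι → Bool, A ≤ B → E B = true → E A = true

lemma sum_prod_pi (φ : ι → Bool → ℝ≥0∞) :
    ∑ A : ι → Bool, ∏ i, φ i (A i) = ∏ i, (φ i false + φ i true) := by
  have := Finset.prod_univ_sum (fun _ : ι => (Finset.univ : Finset Bool)) (fun i b => φ i b)
  rw [Fintype.piFinset_univ] at this
  rw [← this]
  exact Finset.prod_congr rfl fun i _ => by rw [Fintype.sum_bool, add_comm]

lemma harris_mono (μ : ι → Bool → ℝ≥0∞) (hμ : ∀ i, μ i false + μ i true = 1)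
    (f g : (ι → Bool) → ℝ≥0∞) (hf : Monotone f) (hg : Monotone g) :
    (∑ A : ι → Bool, (∏ i, μ i (A i)) * f A) * (∑ A : ι → Bool, (∏ i, μ i (A i)) * g A)
      ≤ ∑ A : ι → Bool, (∏ i, μ i (A i)) * (f A * g A) := by
  set n := Fintype.card ι
  set e : ι ≃ Fin n := Fintype.equivFin ι
  have hsum : ∀ (φ : (ι → Bool) → ℝ≥0∞),
      (∑ A : ι → Bool, (∏ i, μ i (A i)) * φ A)
        = ∑ a : Fin n → Bool, (∏ j, μ (e.symm j) (a j)) * φ (a ∘ e) := by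
    intro φ
    rw [← Equiv.sum_comp (Equiv.arrowCongr e.symm (Equiv.refl Bool))
      (fun A => (∏ i, μ i (A i)) * φ A)]
    refine Finset.sum_congr rfl fun a _ => ?_
    have h1 : (Equiv.arrowCongr e.symm (Equiv.refl Bool)) a = a ∘ e := by
      funext i; simp [Equiv.arrowCongr]
    rw [h1]
    congr 1
    rw [← Equiv.prod_comp e (fun j => μ (e.symm j) (a j))]
    exact Finset.prod_congr rfl fun i _ => by simp
  rw [hsum f, hsum g, hsum (fun A => f A * g A)]
  exact harris_fin n (fun j => μ (e.symm j)) (fun j => hμ (e.symm j))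
    (fun a => f (a ∘ e)) (fun a => g (a ∘ e))
    (fun a a' h => hf (fun i => h (e i))) (fun a a' h => hg (fun i => h (e i)))

lemma harris_anti (μ : ι → Bool → ℝ≥0∞) (hμ : ∀ i, μ i false + μ i true = 1)
    (f g : (ι → Bool) → ℝ≥0∞) (hf : Antitone f) (hg : Antitone g) :
    (∑ A : ι → Bool, (∏ i, μ i (A i)) * f A) * (∑ A : ι → Bool, (∏ i, μ i (A i)) * g A)
      ≤ ∑ A : ι → Bool, (∏ i, μ i (A i)) * (f A * g A) := by
  set N : (ι → Bool) ≃ (ι → Bool) :=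
    { toFun := fun A i => !(A i), invFun := fun A i => !(A i),
      left_inv := fun A => by funext i; simp,
      right_inv := fun A => by funext i; simp } with hN
  set μ' : ι → Bool → ℝ≥0∞ := fun i b => μ i (!b) with hμ'def
  have hsum : ∀ (φ : (ι → Bool) → ℝ≥0∞),
      (∑ A : ι → Bool, (∏ i, μ i (A i)) * φ A)
        = ∑ A : ι → Bool, (∏ i, μ' i (A i)) * φ (N A) := by
    intro φ
    rw [← Equiv.sum_comp N (fun A => (∏ i, μ i (A i)) * φ A)]
    refine Finset.sum_congr rfl fun A _ => ?_
    congr 1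
  have hNmono : ∀ (A B : ι → Bool), A ≤ B → N B ≤ N A := by
    intro A B h i
    have key : ∀ a b : Bool, a ≤ b → (!b) ≤ (!a) := by decide
    show ((!(B i)) ≤ (!(A i)))
    exact key (A i) (B i) (h i)
  rw [hsum f, hsum g, hsum (fun A => f A * g A)]
  exact harris_mono μ' (fun i => by rw [hμ'def]; simpa [add_comm] using hμ i)
    (fun A => f (N A)) (fun A => g (N A))
    (fun A B h => hf (hNmono A B h)) (fun A B h => hg (hNmono A B h))

/-- probability of a Boolean event under product Bernoulli weights -/
def prW (μ : ι → Bool → ℝ≥0∞) (E : (ι → Bool) → Bool) : ℝ≥0∞ :=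
  ∑ A : ι → Bool, (∏ i, μ i (A i)) * (if E A then 1 else 0)

lemma prW_mono (μ : ι → Bool → ℝ≥0∞) {E E' : (ι → Bool) → Bool}
    (h : ∀ A, E A = true → E' A = true) : prW μ E ≤ prW μ E' := by
  refine Finset.sum_le_sum fun A _ => mul_le_mul_right ?_ _
  by_cases hE : E A
  · rw [if_pos hE, if_pos (h A hE)]
  · rw [if_neg hE]; exact zero_le

lemma prW_true (μ : ι → Bool → ℝ≥0∞) (hμ : ∀ i, μ i false + μ i true = 1) :
    prW μ (fun _ => true) = 1 := by
  unfold prW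
  simp only [if_pos, mul_one]
  rw [sum_prod_pi]
  simp [hμ]

lemma indicator_mul (E F : (ι → Bool) → Bool) (A : ι → Bool) :
    ((if E A then (1:ℝ≥0∞) else 0) * (if F A then 1 else 0))
      = if (E A && F A) then 1 else 0 := by
  cases hE : E A <;> cases hF : F A <;> simp

lemma prW_harris_mono (μ : ι → Bool → ℝ≥0∞) (hμ : ∀ i, μ i false + μ i true = 1)
    {E F : (ι → Bool) → Bool} (hE : EvMono E) (hF : EvMono F) :
    prW μ E * prW μ F ≤ prW μ (fun A => E A && F A) := by
  have := harris_mono μ hμ (fun A => if E A then 1 else 0) (fun A => if F A then 1 else 0)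
    (fun A B h => by
      by_cases hEA : E A = true
      · simp [hEA, hE A B h hEA]
      · simp [hEA])
    (fun A B h => by
      by_cases hFA : F A = true
      · simp [hFA, hF A B h hFA]
      · simp [hFA])
  refine this.trans (le_of_eq ?_)
  exact Finset.sum_congr rfl fun A _ => by rw [indicator_mul]

lemma prW_harris_anti (μ : ι → Bool → ℝ≥0∞) (hμ : ∀ i, μ i false + μ i true = 1)
    {E F : (ι → Bool) → Bool} (hE : EvAnti E) (hF : EvAnti F) :
    prW μ E * prW μ F ≤ prW μ (fun A => E A && F A) := by
  have := harris_anti μ hμ (fun A => if E A then 1 else 0) (fun A => if F A then 1 else 0)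
    (fun A B h => by
      by_cases hEB : E B = true
      · simp [hEB, hE A B h hEB]
      · simp [hEB])
    (fun A B h => by
      by_cases hFB : F B = true
      · simp [hFB, hF A B h hFB]
      · simp [hFB])
  refine this.trans (le_of_eq ?_)
  exact Finset.sum_congr rfl fun A _ => by rw [indicator_mul]

lemma prW_prod_anti {κ : Type*} [Fintype κ] [DecidableEq κ]
    (μ : ι → Bool → ℝ≥0∞) (hμ : ∀ i, μ i false + μ i true = 1)
    (E : κ → (ι → Bool) → Bool) (hE : ∀ k, EvAnti (E k)) :
    ∏ k : κ, prW μ (E k) ≤ prW μ (fun A => decide (∀ k, E k A = true)) := by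
  classical
  have main : ∀ s : Finset κ, ∏ k ∈ s, prW μ (E k)
      ≤ prW μ (fun A => decide (∀ k ∈ s, E k A = true)) := by
    intro s
    induction s using Finset.induction with
    | empty =>
      simp only [Finset.prod_empty]
      rw [show (fun A => decide (∀ k ∈ (∅ : Finset κ), E k A = true))
        = (fun _ : ι → Bool => true) by funext A; simp]
      exact le_of_eq (prW_true μ hμ).symm
    | @insert k s hk ih =>
      rw [Finset.prod_insert hk]
      have hrest : EvAnti (fun A => decide (∀ k' ∈ s, E k' A = true)) := by
        intro A B h hB
        simp only [decide_eq_true_eq] at hB ⊢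
        exact fun k' hk' => hE k' A B h (hB k' hk')
      calc prW μ (E k) * ∏ k' ∈ s, prW μ (E k')
          ≤ prW μ (E k) * prW μ (fun A => decide (∀ k' ∈ s, E k' A = true)) :=
            mul_le_mul_right ih _
        _ ≤ prW μ (fun A => E k A && decide (∀ k' ∈ s, E k' A = true)) :=
            prW_harris_anti μ hμ (hE k) hrest
        _ ≤ prW μ (fun A => decide (∀ k' ∈ insert k s, E k' A = true)) := by
            refine prW_mono μ fun A hA => ?_
            simp only [Bool.and_eq_true, decide_eq_true_eq] at hA ⊢
            intro k' hk'
            rcases Finset.mem_insert.1 hk' with rfl | h'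
            · exact hA.1
            · exact hA.2 k' h'
  have := main Finset.univ
  refine this.trans (le_of_eq ?_)
  congr 1
  funext A
  simp

lemma prW_coord (μ : ι → Bool → ℝ≥0∞) (hμ : ∀ i, μ i false + μ i true = 1) (i₀ : ι) :
    prW μ (fun A => A i₀) = μ i₀ true := by
  unfold prW
  set φ : ι → Bool → ℝ≥0∞ :=
    fun i b => μ i b * (if i = i₀ then (if b then 1 else 0) else 1) with hφ
  have h1 : ∀ A : ι → Bool, (∏ i, μ i (A i)) * (if A i₀ then (1:ℝ≥0∞) else 0)
      = ∏ i, φ i (A i) := by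
    intro A
    rw [hφ]
    rw [Finset.prod_mul_distrib]
    congr 1
    rw [Finset.prod_ite_eq' Finset.univ i₀ (fun i => if A i then (1:ℝ≥0∞) else 0)]
    simp
  rw [Finset.sum_congr rfl fun A _ => h1 A, sum_prod_pi φ]
  rw [Finset.prod_eq_single i₀]
  · simp [hφ]
  · intro i _ hne
    simp only [hφ, if_neg hne, mul_one]
    exact hμ i
  · intro h; exact absurd (Finset.mem_univ i₀) h

lemma prW_coord_not (μ : ι → Bool → ℝ≥0∞) (hμ : ∀ i, μ i false + μ i true = 1) (i₀ : ι) :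
    prW μ (fun A => !A i₀) = μ i₀ false := by
  unfold prW
  set φ : ι → Bool → ℝ≥0∞ :=
    fun i b => μ i b * (if i = i₀ then (if b then 0 else 1) else 1) with hφ
  have h1 : ∀ A : ι → Bool, (∏ i, μ i (A i)) * (if !A i₀ then (1:ℝ≥0∞) else 0)
      = ∏ i, φ i (A i) := by
    intro A
    rw [hφ]
    rw [Finset.prod_mul_distrib]
    congr 1
    rw [Finset.prod_ite_eq' Finset.univ i₀ (fun i => if A i then (0:ℝ≥0∞) else 1)]
    cases h : A i₀ <;> simp [h]
  rw [Finset.sum_congr rfl fun A _ => h1 A, sum_prod_pi φ]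
  rw [Finset.prod_eq_single i₀]
  · simp [hφ]
  · intro i _ hne
    simp only [hφ, if_neg hne, mul_one]
    exact hμ i
  · intro h; exact absurd (Finset.mem_univ i₀) h

end ProdBernoulli

/- ============ bridge to the Bernoulli measure ============ -/

def theta (p : ℝ) (b : Bool) : ℝ≥0∞ :=
  if b then ENNReal.ofReal p else ENNReal.ofReal (1 - p)

lemma bernoulli_singleton (p : ℝ) (b : Bool) : bernoulliMeasure p {b} = theta p b := by
  cases b <;> simp [bernoulliMeasure, theta]

lemma bernMeasure_singleton {d : ℕ} (W : Fin d → Fin d → ℝ) (A : Fin d → Fin d → Bool) :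
    bernMeasure W {A} = ∏ u, ∏ v, theta (W u v) (A u v) := by
  have h1 : ({A} : Set (Fin d → Fin d → Bool)) = Set.pi Set.univ (fun u => {A u}) := by
    ext B; simp [funext_iff, Set.mem_pi]
  rw [bernMeasure, h1, Measure.pi_pi]
  refine Finset.prod_congr rfl fun u _ => ?_
  have h2 : ({A u} : Set (Fin d → Bool)) = Set.pi Set.univ (fun v => {A u v}) := by
    ext B; simp [funext_iff, Set.mem_pi]
  rw [h2, Measure.pi_pi]
  exact Finset.prod_congr rfl fun v _ => bernoulli_singleton _ _

/-- uncurrying a flat edge-configuration -/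
def rev {d : ℕ} (B : Fin d × Fin d → Bool) : Fin d → Fin d → Bool := fun u v => B (u, v)

def muW {d : ℕ} (W : Fin d → Fin d → ℝ) : Fin d × Fin d → Bool → ℝ≥0∞ :=
  fun p => theta (W p.1 p.2)

lemma muW_mass {d : ℕ} (W : Fin d → Fin d → ℝ) (hW : ∀ u v, W u v ∈ Set.Icc (0:ℝ) 1) :
    ∀ p : Fin d × Fin d, muW W p false + muW W p true = 1 := by
  intro p
  have h := hW p.1 p.2
  simp only [muW, theta, if_pos, if_neg, Bool.false_eq_true, if_false, if_true]
  rw [← ENNReal.ofReal_add (by linarith [h.2]) h.1]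
  norm_num

lemma lintegral_event {d : ℕ} (W : Fin d → Fin d → ℝ) (E : (Fin d → Fin d → Bool) → Bool) :
    ∫⁻ A, (if E A then (1:ℝ≥0∞) else 0) ∂ bernMeasure W
      = prW (muW W) (fun B => E (rev B)) := by
  rw [lintegral_fintype]
  have h1 : ∀ A : Fin d → Fin d → Bool,
      (if E A then (1:ℝ≥0∞) else 0) * bernMeasure W {A}
        = (∏ u, ∏ v, theta (W u v) (A u v)) * (if E A then 1 else 0) := by
    intro A; rw [bernMeasure_singleton, mul_comm]
  rw [Finset.sum_congr rfl fun A _ => h1 A]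
  unfold prW
  rw [← Equiv.sum_comp (Equiv.curry (Fin d) (Fin d) Bool)
    (fun A => (∏ u, ∏ v, theta (W u v) (A u v)) * (if E A then (1:ℝ≥0∞) else 0))]
  refine Finset.sum_congr rfl fun B _ => ?_
  have h2 : (Equiv.curry (Fin d) (Fin d) Bool) B = rev B := rfl
  rw [h2]
  congr 1
  rw [Fintype.prod_prod_type]
  rfl

/- ============ monotonicity of reachability ============ -/

lemma bool_le_imp : ∀ {a b : Bool}, a ≤ b → a = true → b = true := by decide

lemma reach_mono {d : ℕ} {A A' : Fin d → Fin d → Bool} (h : A ≤ A') :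
    ∀ (l : ℕ) (x y : Fin d), ReachF A l x y = true → ReachF A' l x y = true := by
  intro l
  induction l with
  | zero => intro x y; simp [ReachF]
  | succ l ih =>
    intro x y
    simp only [ReachF, Bool.or_eq_true, decide_eq_true_eq]
    rintro (⟨u, h1, h2⟩ | h1)
    · exact Or.inl ⟨u, ih x u h1, bool_le_imp (h u y) h2⟩
    · exact Or.inr (ih x y h1)

lemma rev_mono {d : ℕ} {B B' : Fin d × Fin d → Bool} (h : B ≤ B') : rev B ≤ rev B' :=
  fun u v => h (u, v)

/- ============ the two key soft bounds ============ -/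

section Soft

variable {d : ℕ} {W : Fin d → Fin d → ℝ} {α : ℝ}

lemma reach_bound (hW : ∀ u v, W u v ∈ Set.Icc (0:ℝ) 1) (hα : 0 < α) :
    ∀ (l : ℕ) (x y : Fin d),
      eexp (softReach α W l x y) ≤ prW (muW W) (fun B => ReachF (rev B) l x y) := by
  have hμ := muW_mass W hW
  intro l
  induction l with
  | zero =>
    intro x y
    by_cases hxy : x = y
    · subst hxy
      rw [show softReach α W 0 x x = 0 by simp [softReach]]
      rw [eexp_zero]
      have hev : (fun B : Fin d × Fin d → Bool => ReachF (rev B) 0 x x)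
          = fun _ => true := by
        funext B; simp [ReachF]
      rw [hev, prW_true _ hμ]
    · rw [show softReach α W 0 x y = ⊥ by simp [softReach, hxy]]
      simp
  | succ l ih =>
    intro x y
    rw [show softReach α W (l+1) x y = softOr α
        (Fin.cons (softReach α W l x y)
          (fun u : Fin d => softReach α W l x u + elog (ENNReal.ofReal (W u y)))) from rfl]
    rw [← le_elog_iff]
    refine softOr_le hα ?_
    intro i
    refine Fin.cases ?_ ?_ i
    · rw [Fin.cons_zero, le_elog_iff]
      refine (ih x y).trans (prW_mono _ ?_)
      intro B hB
      simp only [ReachF, Bool.or_eq_true]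
      exact Or.inr hB
    · intro u
      rw [Fin.cons_succ, le_elog_iff, eexp_add, eexp_elog]
      have hEu : EvMono (fun B : Fin d × Fin d → Bool => ReachF (rev B) l x u) :=
        fun B B' h hB => reach_mono (rev_mono h) l x u hB
      have hcoord : EvMono (fun B : Fin d × Fin d → Bool => B (u, y)) :=
        fun B B' h hB => bool_le_imp (h (u, y)) hB
      calc eexp (softReach α W l x u) * ENNReal.ofReal (W u y)
          ≤ prW (muW W) (fun B => ReachF (rev B) l x u)
              * prW (muW W) (fun B => B (u, y)) := by
            refine mul_le_mul' (ih x u) (le_of_eq ?_)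
            rw [prW_coord _ hμ (u, y)]
            rfl
        _ ≤ prW (muW W) (fun B => ReachF (rev B) l x u && B (u, y)) :=
            prW_harris_mono _ hμ hEu hcoord
        _ ≤ prW (muW W) (fun B => ReachF (rev B) (l+1) x y) := by
            refine prW_mono _ fun B hB => ?_
            simp only [Bool.and_eq_true] at hB
            simp only [ReachF, Bool.or_eq_true, decide_eq_true_eq]
            exact Or.inl ⟨u, hB.1, hB.2⟩

lemma unreach_bound (hW : ∀ u v, W u v ∈ Set.Icc (0:ℝ) 1) (hα : 0 < α) :
    ∀ (l : ℕ) (x y : Fin d),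
      eexp (softUnreach α W l x y) ≤ prW (muW W) (fun B => !ReachF (rev B) l x y) := by
  have hμ := muW_mass W hW
  intro l
  induction l with
  | zero =>
    intro x y
    by_cases hxy : x = y
    · rw [show softUnreach α W 0 x y = ⊥ by simp [softUnreach, hxy]]
      simp
    · rw [show softUnreach α W 0 x y = 0 by simp [softUnreach, hxy]]
      rw [eexp_zero]
      have hev : (fun B : Fin d × Fin d → Bool => !ReachF (rev B) 0 x y)
          = fun _ => true := by
        funext B; simp [ReachF, hxy]
      rw [hev, prW_true _ hμ]
  | succ l ih =>
    intro x y
    rw [show softUnreach α W (l+1) x y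
        = (∑ u : Fin d,
            softOr α ![softUnreach α W l x u, elog (ENNReal.ofReal (1 - W u y))])
          + softUnreach α W l x y from rfl]
    rw [eexp_add, eexp_sum]
    have hEV : ∀ u : Fin d, EvAnti
        (fun B : Fin d × Fin d → Bool => (!ReachF (rev B) l x u) || (!B (u, y))) := by
      intro u B B' h hB
      simp only [Bool.or_eq_true, Bool.not_eq_true'] at hB ⊢
      rcases hB with hB | hB
      · left
        cases hc : ReachF (rev B) l x u
        · rfl
        · exact absurd (reach_mono (rev_mono h) l x u hc) (by rw [hB]; simp)
      · right
        cases hc : B (u, y)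
        · rfl
        · exact absurd (bool_le_imp (h (u, y)) hc) (by rw [hB]; simp)
    have hanti2 : EvAnti (fun B : Fin d × Fin d → Bool => !ReachF (rev B) l x y) := by
      intro B B' h hB
      simp only [Bool.not_eq_true'] at hB ⊢
      cases hc : ReachF (rev B) l x y
      · rfl
      · exact absurd (reach_mono (rev_mono h) l x y hc) (by rw [hB]; simp)
    have hstep : ∀ u : Fin d,
        eexp (softOr α ![softUnreach α W l x u, elog (ENNReal.ofReal (1 - W u y))])
          ≤ prW (muW W) (fun B => (!ReachF (rev B) l x u) || (!B (u, y))) := by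
      intro u
      rw [← le_elog_iff]
      refine softOr_le hα ?_
      intro i
      refine Fin.cases ?_ ?_ i
      · rw [Matrix.cons_val_zero]
        rw [le_elog_iff]
        refine (ih x u).trans (prW_mono _ ?_)
        intro B hB
        simp only [Bool.or_eq_true]
        exact Or.inl hB
      · intro j
        rw [Matrix.cons_val_succ, Subsingleton.elim j 0, Matrix.cons_val_zero]
        rw [le_elog_iff, eexp_elog]
        have hco : ENNReal.ofReal (1 - W u y) = prW (muW W) (fun B => !B (u, y)) := by
          rw [prW_coord_not _ hμ (u, y)]; rfl
        rw [hco]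
        refine prW_mono _ fun B hB => ?_
        simp only [Bool.or_eq_true]
        exact Or.inr hB
    refine le_trans (mul_le_mul' (Finset.prod_le_prod' fun u _ => hstep u) (ih x y)) ?_
    refine le_trans (mul_le_mul_left (prW_prod_anti _ hμ _ hEV) _) ?_
    refine le_trans (prW_harris_anti _ hμ ?_ hanti2) ?_
    · intro B B' h hB
      simp only [decide_eq_true_eq] at hB ⊢
      exact fun u => hEV u B B' h (hB u)
    · refine prW_mono _ fun B hB => ?_
      simp only [Bool.and_eq_true, decide_eq_true_eq] at hB
      obtain ⟨h1, h2⟩ := hB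
      simp only [Bool.not_eq_true'] at h2 ⊢
      simp only [ReachF, Bool.or_eq_false_iff, decide_eq_false_iff_not]
      refine ⟨?_, h2⟩
      rintro ⟨u, hu1, hu2⟩
      have h3 := h1 u
      simp only [Bool.or_eq_true, Bool.not_eq_true'] at h3
      rcases h3 with hh | hh
      · rw [hu1] at hh; simp at hh
      · have h4 : B (u, y) = true := hu2
        rw [h4] at hh; simp at hh

end Soft

/-- Theorem 3.7, 0th-order inequalities: the soft d-separation and d-connection
scores lower-bound the logarithms of the expected indicators
`S_A^(0)(x,y) = 1 − C_A^(0)(x,y)` and `C_A^(0)(x,y)` under `Bern(W)`. -/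
theorem soft0_le_log_expectation {d : ℕ} (W : Fin d → Fin d → ℝ)
    (hW : ∀ u v, W u v ∈ Set.Icc (0 : ℝ) 1) (α : ℝ) (hα : α ∈ Set.Ioc (0 : ℝ) 1)
    (x y : Fin d) :
    softS0 α W x y ≤
      elog (∫⁻ A, (if C0 A x y = true then 0 else 1) ∂ bernMeasure W) ∧
    softC0 α W x y ≤
      elog (∫⁻ A, (if C0 A x y = true then 1 else 0) ∂ bernMeasure W) := by
  obtain ⟨hα0, -⟩ := hα
  have hμ := muW_mass W hW
  constructor
  · -- separation side
    have heq : (fun A : Fin d → Fin d → Bool => if C0 A x y = true then (0:ℝ≥0∞) else 1)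
        = fun A => if (!C0 A x y) = true then 1 else 0 := by
      funext A; cases h : C0 A x y <;> simp [h]
    have hint : (∫⁻ A, (if C0 A x y = true then (0:ℝ≥0∞) else 1) ∂ bernMeasure W)
        = prW (muW W) (fun B => !C0 (rev B) x y) := by
      rw [show (∫⁻ A, (if C0 A x y = true then (0:ℝ≥0∞) else 1) ∂ bernMeasure W)
          = ∫⁻ A, (if (!C0 A x y) = true then (1:ℝ≥0∞) else 0) ∂ bernMeasure W from by
        rw [heq]]
      exact lintegral_event W (fun A => !C0 A x y)
    rw [hint, le_elog_iff]
    unfold softS0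
    rw [eexp_sum]
    have hFa : ∀ a : Fin d, EvAnti (fun B : Fin d × Fin d → Bool =>
        (!ReachF (rev B) d a x) || (!ReachF (rev B) d a y)) := by
      intro a B B' h hB
      simp only [Bool.or_eq_true, Bool.not_eq_true'] at hB ⊢
      rcases hB with hB | hB
      · left
        cases hc : ReachF (rev B) d a x
        · rfl
        · exact absurd (reach_mono (rev_mono h) d a x hc) (by rw [hB]; simp)
      · right
        cases hc : ReachF (rev B) d a y
        · rfl
        · exact absurd (reach_mono (rev_mono h) d a y hc) (by rw [hB]; simp)
    have hstep : ∀ a : Fin d,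
        eexp (softOr α ![softUnreach α W d a x, softUnreach α W d a y])
          ≤ prW (muW W) (fun B => (!ReachF (rev B) d a x) || (!ReachF (rev B) d a y)) := by
      intro a
      rw [← le_elog_iff]
      refine softOr_le hα0 ?_
      intro i
      refine Fin.cases ?_ ?_ i
      · rw [Matrix.cons_val_zero, le_elog_iff]
        refine (unreach_bound hW hα0 d a x).trans (prW_mono _ ?_)
        intro B hB
        simp only [Bool.or_eq_true]
        exact Or.inl hB
      · intro j
        rw [Matrix.cons_val_succ, Subsingleton.elim j 0, Matrix.cons_val_zero, le_elog_iff]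
        refine (unreach_bound hW hα0 d a y).trans (prW_mono _ ?_)
        intro B hB
        simp only [Bool.or_eq_true]
        exact Or.inr hB
    refine le_trans (Finset.prod_le_prod' fun a _ => hstep a) ?_
    refine le_trans (prW_prod_anti _ hμ _ hFa) ?_
    refine prW_mono _ fun B hB => ?_
    simp only [decide_eq_true_eq] at hB
    simp only [C0, Bool.not_eq_true', decide_eq_false_iff_not]
    rintro ⟨a, h1, h2⟩
    have h3 := hB a
    simp only [Bool.or_eq_true, Bool.not_eq_true'] at h3
    rcases h3 with hh | hh
    · rw [h1] at hh; simp at hh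
    · rw [h2] at hh; simp at hh
  · -- connection side
    rw [show (∫⁻ A, (if C0 A x y = true then (1:ℝ≥0∞) else 0) ∂ bernMeasure W)
        = prW (muW W) (fun B => C0 (rev B) x y) from lintegral_event W (fun A => C0 A x y)]
    unfold softC0
    refine softOr_le hα0 fun a => ?_
    rw [le_elog_iff, eexp_add]
    refine le_trans (mul_le_mul' (reach_bound hW hα0 d a x) (reach_bound hW hα0 d a y)) ?_
    refine le_trans (prW_harris_mono _ hμ ?_ ?_) (prW_mono _ ?_)
    · exact fun B B' h hB => reach_mono (rev_mono h) d a x hB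
    · exact fun B B' h hB => reach_mono (rev_mono h) d a y hB
    · intro B hB
      simp only [Bool.and_eq_true] at hB
      simp only [C0, decide_eq_true_eq]
      exact ⟨a, hB.1, hB.2⟩

end
end

section
/- For every m ≥ 1 and every x : Fin m → ℝ, the function α ↦ α · log((1/m) · Σ_i exp(x_i / α)) tends to max_i x_i as α → 0 from the right (i.e., along the filter of positive reals approaching 0). -/
/-- As `α → 0⁺`, the LogMeanExp soft disjunction `α log((1/m) Σ_i exp(x_i/α))`
tends to `max_i x_i`. -/
theorem logMeanExp_tendsto_max (m : ℕ) (hm : 0 < m) (x : Fin m → ℝ) :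
    Filter.Tendsto
      (fun α : ℝ => α * Real.log ((1 / (m : ℝ)) * ∑ i, Real.exp (x i / α)))
      (nhdsWithin 0 (Set.Ioi 0))
      (nhds (Finset.univ.sup' (Finset.univ_nonempty_iff.mpr ⟨⟨0, hm⟩⟩) x)) := by
  have hne : (Finset.univ : Finset (Fin m)).Nonempty := Finset.univ_nonempty_iff.mpr ⟨⟨0, hm⟩⟩
  set M := Finset.univ.sup' hne x with hMdef
  have hmR : (0:ℝ) < m := Nat.cast_pos.mpr hm
  -- For α > 0, abbreviate S α
  set S : ℝ → ℝ := fun α => (1 / (m:ℝ)) * ∑ i, Real.exp ((x i - M) / α) with hSdef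
  have hSlb : ∀ α : ℝ, α ∈ Set.Ioi (0:ℝ) → 1 / (m:ℝ) ≤ S α := by
    intro α hα
    obtain ⟨i0, _, hi0⟩ := Finset.exists_mem_eq_sup' hne x
    have h1 : (1:ℝ) ≤ ∑ i, Real.exp ((x i - M) / α) := by
      have := Finset.single_le_sum (f := fun i => Real.exp ((x i - M) / α))
        (fun i _ => (Real.exp_pos _).le) (Finset.mem_univ i0)
      have h0 : x i0 - M = 0 := by rw [hMdef, hi0]; ring
      simpa [h0] using this
    have : (1/(m:ℝ)) * 1 ≤ (1/(m:ℝ)) * ∑ i, Real.exp ((x i - M) / α) :=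
      mul_le_mul_of_nonneg_left h1 (by positivity)
    simpa [hSdef] using this
  have hSub : ∀ α : ℝ, α ∈ Set.Ioi (0:ℝ) → S α ≤ 1 := by
    intro α hα
    have hsum : ∑ i, Real.exp ((x i - M) / α) ≤ (m:ℝ) := by
      calc ∑ i, Real.exp ((x i - M) / α) ≤ ∑ _i : Fin m, (1:ℝ) := by
            refine Finset.sum_le_sum fun i _ => ?_
            have hx : x i ≤ M := Finset.le_sup' x (Finset.mem_univ i)
            have : (x i - M) / α ≤ 0 :=
              div_nonpos_of_nonpos_of_nonneg (by linarith) (le_of_lt hα)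
            simpa using Real.exp_le_one_iff.mpr this
        _ = (m:ℝ) := by simp
    have := mul_le_mul_of_nonneg_left hsum (le_of_lt (by positivity : (0:ℝ) < 1/(m:ℝ)))
    calc S α ≤ (1/(m:ℝ)) * (m:ℝ) := this
      _ = 1 := by field_simp
  have hSpos : ∀ α : ℝ, α ∈ Set.Ioi (0:ℝ) → 0 < S α := fun α hα =>
    lt_of_lt_of_le (by positivity) (hSlb α hα)
  -- squeeze : α * log (S α) → 0
  have hsq : Filter.Tendsto (fun α : ℝ => α * Real.log (S α))
      (nhdsWithin 0 (Set.Ioi 0)) (nhds 0) := by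
    have hlow : Filter.Tendsto (fun α : ℝ => α * Real.log (1/(m:ℝ)))
        (nhdsWithin 0 (Set.Ioi 0)) (nhds 0) := by
      have : Filter.Tendsto (fun α : ℝ => α * Real.log (1/(m:ℝ))) (nhds 0)
          (nhds (0 * Real.log (1/(m:ℝ)))) :=
        (continuous_id.mul continuous_const).tendsto 0
      simpa using this.mono_left nhdsWithin_le_nhds
    refine tendsto_of_tendsto_of_tendsto_of_le_of_le' hlow tendsto_const_nhds ?_ ?_
    · filter_upwards [self_mem_nhdsWithin] with α hα
      have := Real.log_le_log (by positivity) (hSlb α hα)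
      exact mul_le_mul_of_nonneg_left this (le_of_lt hα)
    · filter_upwards [self_mem_nhdsWithin] with α hα
      have hlog : Real.log (S α) ≤ 0 := Real.log_nonpos (hSpos α hα).le (hSub α hα)
      exact mul_nonpos_of_nonneg_of_nonpos (le_of_lt hα) hlog
  -- rewrite f
  have heq : ∀ α : ℝ, α ∈ Set.Ioi (0:ℝ) →
      α * Real.log ((1 / (m : ℝ)) * ∑ i, Real.exp (x i / α)) = M + α * Real.log (S α) := by
    intro α hα
    have hα0 : (0:ℝ) < α := hα
    have hexp : ∀ i : Fin m, Real.exp (x i / α) = Real.exp (M/α) * Real.exp ((x i - M)/α) := by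
      intro i
      rw [← Real.exp_add]
      congr 1
      field_simp
      ring
    have hsum : (1 / (m : ℝ)) * ∑ i, Real.exp (x i / α) = Real.exp (M/α) * S α := by
      simp only [hexp, ← Finset.mul_sum, hSdef]
      ring
    rw [hsum, Real.log_mul (Real.exp_pos _).ne' (hSpos α hα).ne', Real.log_exp]
    field_simp
  have : Filter.Tendsto (fun α : ℝ => M + α * Real.log (S α))
      (nhdsWithin 0 (Set.Ioi 0)) (nhds (M + 0)) := tendsto_const_nhds.add hsq
  rw [add_zero] at this
  exact this.congr' (by filter_upwards [self_mem_nhdsWithin] with α hα using (heq α hα).symm)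
end

section
/- Let W : Fin d → Fin d → ℝ have all entries in [0,1], let μ = Bern(W), fix nodes x, u, y ∈ Fin d and l ≥ 0, and define f, g : (Fin d → Fin d → Bool) → ℝ by f(A) = 1 if there is no directed path from x to u in A of length at most l and f(A) = 0 otherwise, and g(A) = 1 if A u y = false and g(A) = 0 otherwise. Then ∫ f·g dμ ≥ (∫ f dμ) · (∫ g dμ); that is, bounded-length unreachability and the absence of an edge are nonnegatively correlated under the product Bernoulli measure. -/
open MeasureTheory
open scoped ENNReal

noncomputable section

/-- Existence of a bounded-length path from `x` to `u` only depends on edges leaving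
nodes other than `u`: a shortest such path can be truncated at the first visit of `u`. -/
lemma path_mono_rows {d : ℕ} {A B : Fin d → Fin d → Bool} {x u : Fin d} {l : ℕ}
    (hAB : ∀ a b, a ≠ u → A a b = B a b)
    (h : ∃ k ≤ l, HasPath A x u k) : ∃ k ≤ l, HasPath B x u k := by
  classical
  obtain ⟨k, hk, v, h0, hke, hedge⟩ := h
  have hex : ∃ j, v j = u := ⟨k, hke⟩
  have hju : v (Nat.find hex) = u := Nat.find_spec hex
  have hjk : Nat.find hex ≤ k := Nat.find_min' hex hke
  refine ⟨Nat.find hex, hjk.trans hk, v, h0, hju, fun i hi => ?_⟩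
  have hne : v i ≠ u := Nat.find_min hex hi
  rw [← hAB _ _ hne]
  exact hedge i (lt_of_lt_of_le hi hjk)

open Classical in
/-- Bounded-length unreachability and the absence of an edge are nonnegatively
correlated under the product Bernoulli measure: with
`f A = 1` iff there is no directed path from `x` to `u` in `A` of length at most `l`,
and `g A = 1` iff `A u y = false`, one has `∫ f·g dμ ≥ (∫ f dμ)·(∫ g dμ)`. -/
theorem unreach_nonedge_nonneg_correlated {d : ℕ} (W : Fin d → Fin d → ℝ)
    (hW : ∀ u v, W u v ∈ Set.Icc (0 : ℝ) 1) (x u y : Fin d) (l : ℕ)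
    (f g : (Fin d → Fin d → Bool) → ℝ)
    (hf : f = fun A => if ¬ ∃ k ≤ l, HasPath A x u k then 1 else 0)
    (hg : g = fun A => if A u y = false then 1 else 0) :
    (∫ A, f A * g A ∂ bernMeasure W) ≥
      (∫ A, f A ∂ bernMeasure W) * (∫ A, g A ∂ bernMeasure W) := by
  classical
  haveI hprob : ∀ a b : Fin d, IsProbabilityMeasure (bernoulliMeasure (W a b)) := by
    intro a b
    obtain ⟨h0, h1⟩ := hW a b
    constructor
    show bernoulliMeasure (W a b) Set.univ = 1
    have : bernoulliMeasure (W a b) Set.univ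
        = ENNReal.ofReal (W a b) + ENNReal.ofReal (1 - W a b) := by
      simp [bernoulliMeasure]
    rw [this, ← ENNReal.ofReal_add h0 (by linarith)]
    norm_num
  set p : Fin d → Prop := fun a => a = u with hp
  set e := MeasurableEquiv.piEquivPiSubtypeProd (fun _ : Fin d => (Fin d → Bool)) p with he
  set π₁ : Measure (∀ _ : Subtype p, Fin d → Bool) :=
    @Measure.pi (Subtype p) (fun _ => Fin d → Bool) (Subtype.fintype p) (fun _ => inferInstance)
      (fun i : Subtype p => Measure.pi fun v => bernoulliMeasure (W (↑i) v)) with hπ₁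
  set π₂ : Measure (∀ _ : {a // ¬ p a}, Fin d → Bool) :=
    Measure.pi fun i : {a // ¬ p a} => Measure.pi fun v => bernoulliMeasure (W (↑i) v) with hπ₂
  have hmp : MeasurePreserving (⇑e) (bernMeasure W) (π₁.prod π₂) := by
    rw [hπ₁, hπ₂, he]
    exact measurePreserving_piEquivPiSubtypeProd
      (fun a : Fin d => Measure.pi fun v => bernoulliMeasure (W a v)) p
  have hmps : MeasurePreserving e.symm (π₁.prod π₂) (bernMeasure W) :=
    MeasurePreserving.symm e hmp
  -- the two factor functions
  set G : (∀ _ : Subtype p, Fin d → Bool) → ℝ :=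
    fun r => if r ⟨u, rfl⟩ y = false then 1 else 0 with hG
  set F : (∀ _ : {a // ¬ p a}, Fin d → Bool) → ℝ :=
    fun r => if ¬ ∃ k ≤ l,
      HasPath (fun a b => if h : p a then false else r ⟨a, h⟩ b) x u k then 1 else 0 with hF
  have hsymm : ∀ (z : (∀ _ : Subtype p, Fin d → Bool) × (∀ _ : {a // ¬ p a}, Fin d → Bool))
      (a : Fin d), e.symm z a = if h : p a then z.1 ⟨a, h⟩ else z.2 ⟨a, h⟩ := fun z a => rfl
  have hge : ∀ z, g (e.symm z) = G z.1 := by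
    intro z
    rw [hg]
    simp only [hsymm z u]
    rw [dif_pos rfl]
  have hfe : ∀ z, f (e.symm z) = F z.2 := by
    intro z
    rw [hf]
    simp only []
    have key : (∃ k ≤ l, HasPath (e.symm z) x u k) ↔
        (∃ k ≤ l, HasPath (fun a b => if h : p a then false else z.2 ⟨a, h⟩ b) x u k) := by
      constructor
      · refine path_mono_rows (fun a b ha => ?_)
        rw [hsymm z a, dif_neg ha, dif_neg ha]
      · refine path_mono_rows (fun a b ha => ?_)
        rw [hsymm z a, dif_neg ha, dif_neg ha]
    simp only [key]
    rfl
  -- rewrite each integral via the measure-preserving equivalence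
  have hint : ∀ φ : (Fin d → Fin d → Bool) → ℝ,
      ∫ A, φ A ∂ bernMeasure W = ∫ z, φ (e.symm z) ∂ π₁.prod π₂ := by
    intro φ
    exact (MeasurePreserving.integral_comp hmps e.symm.measurableEmbedding φ).symm
  have h1 : ∫ A, f A * g A ∂ bernMeasure W = (∫ r, G r ∂ π₁) * ∫ r, F r ∂ π₂ := by
    rw [hint (fun A => f A * g A)]
    have : (fun z : (∀ _ : Subtype p, Fin d → Bool) × (∀ _ : {a // ¬ p a}, Fin d → Bool) =>
        f (e.symm z) * g (e.symm z)) = fun z => G z.1 * F z.2 := by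
      funext z; rw [hfe z, hge z, mul_comm]
    rw [show (∫ z, f (e.symm z) * g (e.symm z) ∂ π₁.prod π₂)
        = ∫ z, G z.1 * F z.2 ∂ π₁.prod π₂ from by rw [this]]
    exact integral_prod_mul G F
  have h2 : ∫ A, f A ∂ bernMeasure W = ∫ r, F r ∂ π₂ := by
    rw [hint f]
    have : (fun z : (∀ _ : Subtype p, Fin d → Bool) × (∀ _ : {a // ¬ p a}, Fin d → Bool) =>
        f (e.symm z)) = fun z => (fun _ => (1 : ℝ)) z.1 * F z.2 := by
      funext z; rw [hfe z, one_mul]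
    rw [this, integral_prod_mul (fun _ => (1 : ℝ)) F]
    simp
  have h3 : ∫ A, g A ∂ bernMeasure W = ∫ r, G r ∂ π₁ := by
    rw [hint g]
    have : (fun z : (∀ _ : Subtype p, Fin d → Bool) × (∀ _ : {a // ¬ p a}, Fin d → Bool) =>
        g (e.symm z)) = fun z => G z.1 * (fun _ => (1 : ℝ)) z.2 := by
      funext z; rw [hge z, mul_one]
    rw [this, integral_prod_mul G (fun _ => (1 : ℝ))]
    simp
  rw [h1, h2, h3, mul_comm]

end
end

section
/- Fix a linearly ordered finite ground set V = Fin d and let ℐ = ℐ₀ ∪ ℐ₁, where ℐ₀ = {({x},{y},∅) : x, y ∈ V, x > y} and ℐ₁ = {({x},{y},{z}) : x, y, z ∈ V, x > y, z ∉ {x,y}}. Then there is no instance of any of the five graphoid inference rules (symmetry, decomposition, weak union, contraction, intersection, with the nonemptiness and disjointness conditions stated in the definitions) whose conclusion belongs to ℐ and all of whose premises belong to ℐ. Consequently, no CI statement in ℐ can be obtained in a single graphoid inference step from other CI statements in ℐ. (Lemma 4.3.) -/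
/-- A CI triple over the ground set `Fin d`: an ordered triple `(X, Y, Z)` of finite
subsets. (Validity — `X`, `Y` nonempty and `X`, `Y`, `Z` pairwise disjoint — is
enforced in the side conditions of the inference rules.) -/
abbrev CITriple (d : ℕ) := Finset (Fin d) × Finset (Fin d) × Finset (Fin d)

/-- One inference step of the five graphoid rules: `GraphoidStep premises conclusion`
holds iff the rule instance derives `conclusion` from the list `premises`, with the
required nonemptiness and pairwise-disjointness side conditions. -/
inductive GraphoidStep (d : ℕ) : List (CITriple d) → CITriple d → Prop
  | symmetry (X Y Z : Finset (Fin d)) (hX : X.Nonempty) (hY : Y.Nonempty)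
      (hXY : Disjoint X Y) (hXZ : Disjoint X Z) (hYZ : Disjoint Y Z) :
      GraphoidStep d [(X, Y, Z)] (Y, X, Z)
  | decomposition (X Y W Z : Finset (Fin d)) (hX : X.Nonempty) (hY : Y.Nonempty)
      (hW : W.Nonempty) (hXY : Disjoint X Y) (hXW : Disjoint X W) (hXZ : Disjoint X Z)
      (hYW : Disjoint Y W) (hYZ : Disjoint Y Z) (hWZ : Disjoint W Z) :
      GraphoidStep d [(X, Y ∪ W, Z)] (X, Y, Z)
  | weakUnion (X Y W Z : Finset (Fin d)) (hX : X.Nonempty) (hY : Y.Nonempty)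
      (hW : W.Nonempty) (hXY : Disjoint X Y) (hXW : Disjoint X W) (hXZ : Disjoint X Z)
      (hYW : Disjoint Y W) (hYZ : Disjoint Y Z) (hWZ : Disjoint W Z) :
      GraphoidStep d [(X, Y ∪ W, Z)] (X, Y, Z ∪ W)
  | contraction (X Y W Z : Finset (Fin d)) (hX : X.Nonempty) (hY : Y.Nonempty)
      (hW : W.Nonempty) (hXY : Disjoint X Y) (hXW : Disjoint X W) (hXZ : Disjoint X Z)
      (hYW : Disjoint Y W) (hYZ : Disjoint Y Z) (hWZ : Disjoint W Z) :
      GraphoidStep d [(X, Y, Z), (X, W, Z ∪ Y)] (X, Y ∪ W, Z)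
  | intersection (X Y W Z : Finset (Fin d)) (hX : X.Nonempty) (hY : Y.Nonempty)
      (hW : W.Nonempty) (hXY : Disjoint X Y) (hXW : Disjoint X W) (hXZ : Disjoint X Z)
      (hYW : Disjoint Y W) (hYZ : Disjoint Y Z) (hWZ : Disjoint W Z) :
      GraphoidStep d [(X, Y, Z ∪ W), (X, W, Z ∪ Y)] (X, Y ∪ W, Z)

/-- The family `ℐ = ℐ₀ ∪ ℐ₁` of low-order CI statements: `ℐ₀` are the triples
`({x}, {y}, ∅)` with `x > y`, and `ℐ₁` are the triples `({x}, {y}, {z})` with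
`x > y` and `z ∉ {x, y}`. -/
def lowOrderCI (d : ℕ) : Set (CITriple d) :=
  {t | ∃ x y : Fin d, y < x ∧ t = ({x}, {y}, (∅ : Finset (Fin d)))} ∪
  {t | ∃ x y z : Fin d, y < x ∧ z ≠ x ∧ z ≠ y ∧ t = ({x}, {y}, ({z} : Finset (Fin d)))}

/-- Lemma 4.3 (Mutual Independence of Low-order CI Statements): there is no instance
of any of the five graphoid inference rules whose conclusion belongs to `ℐ` and all
of whose premises belong to `ℐ`; hence no CI statement in `ℐ` can be obtained in a
single graphoid inference step from other CI statements in `ℐ`. -/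
theorem no_graphoid_step_within_lowOrderCI (d : ℕ)
    (premises : List (CITriple d)) (conclusion : CITriple d)
    (hstep : GraphoidStep d premises conclusion)
    (hconcl : conclusion ∈ lowOrderCI d)
    (hprem : ∀ p ∈ premises, p ∈ lowOrderCI d) : False := by
  have union_not_singleton : ∀ (Y W : Finset (Fin d)), Y.Nonempty → W.Nonempty →
      Disjoint Y W → ∀ a : Fin d, Y ∪ W ≠ {a} := by
    intro Y W hY hW hYW a h
    obtain ⟨y, hy⟩ := hY
    obtain ⟨w, hw⟩ := hW
    have hy' : y ∈ ({a} : Finset (Fin d)) := h ▸ Finset.mem_union_left _ hy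
    have hw' : w ∈ ({a} : Finset (Fin d)) := h ▸ Finset.mem_union_right _ hw
    simp only [Finset.mem_singleton] at hy' hw'
    exact (Finset.disjoint_left.1 hYW hy) (hy' ▸ hw' ▸ hw)
  have snd_singleton : ∀ t ∈ lowOrderCI d, ∃ a : Fin d, t.2.1 = {a} := by
    rintro t (⟨x, y, _, rfl⟩ | ⟨x, y, z, _, _, _, rfl⟩) <;> exact ⟨y, rfl⟩
  cases hstep with
  | symmetry X Y Z hX hY hXY hXZ hYZ =>
    have hp := hprem (X, Y, Z) (by simp)
    rcases hconcl with ⟨x, y, hyx, hc⟩ | ⟨x, y, z, hyx, _, _, hc⟩ <;>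
    rcases hp with ⟨x', y', hyx', hp⟩ | ⟨x', y', z', hyx', _, _, hp⟩ <;>
    · simp only [Prod.mk.injEq] at hc hp
      have h1 : x' = y := Finset.singleton_injective (hp.1.symm.trans hc.2.1)
      have h2 : y' = x := Finset.singleton_injective (hp.2.1.symm.trans hc.1)
      subst h1; subst h2
      exact absurd hyx (not_lt.2 hyx'.le)
  | decomposition X Y W Z hX hY hW hXY hXW hXZ hYW hYZ hWZ =>
    obtain ⟨a, ha⟩ := snd_singleton _ (hprem (X, Y ∪ W, Z) (by simp))
    exact union_not_singleton Y W hY hW hYW a ha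
  | weakUnion X Y W Z hX hY hW hXY hXW hXZ hYW hYZ hWZ =>
    obtain ⟨a, ha⟩ := snd_singleton _ (hprem (X, Y ∪ W, Z) (by simp))
    exact union_not_singleton Y W hY hW hYW a ha
  | contraction X Y W Z hX hY hW hXY hXW hXZ hYW hYZ hWZ =>
    obtain ⟨a, ha⟩ := snd_singleton _ hconcl
    exact union_not_singleton Y W hY hW hYW a ha
  | intersection X Y W Z hX hY hW hXY hXW hXZ hYW hYZ hWZ =>
    obtain ⟨a, ha⟩ := snd_singleton _ hconcl
    exact union_not_singleton Y W hY hW hYW a ha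
end
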